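/- arXiv:math/0608338 — 2 statements merged into one kernel-verified Lean document; each statement's English description precedes it below -/
import Mathlib

section
/- Let A and B be self-adjoint, non-negative operators in separable Hilbert spaces H and K, respectively. Then the kernel of the closure of A⊗I + I⊗B (defined on the algebraic tensor product of the domains) equals (Ker A) ⊗ (Ker B), the closed tensor product of the kernels. -/
open scoped RealInnerProductSpace

/-! ### Auxiliary lemmas: positive semidefinite pairings -/

lemma psd_pair_nonneg {ι : Type*} [Fintype ι] (M N : ι → ι → ℝ)
    (hNsym : ∀ i j, N i j = N j i)
    (hM : ∀ x : ι → ℝ, 0 ≤ ∑ i, ∑ j, x i * M i j * x j)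
    (hN : ∀ x : ι → ℝ, 0 ≤ ∑ i, ∑ j, x i * N i j * x j) :
    0 ≤ ∑ i, ∑ j, M i j * N i j := by
  classical
  have hNps : Matrix.PosSemidef (Matrix.of N) := by
    rw [Matrix.posSemidef_iff_dotProduct_mulVec]
    constructor
    · ext i j
      simp [Matrix.conjTranspose, hNsym i j]
    · intro x
      have := hN x
      simpa [dotProduct, Matrix.mulVec, Finset.mul_sum, mul_comm, mul_assoc, mul_left_comm]
        using this
  obtain ⟨m, B, hB⟩ := Matrix.posSemidef_iff_eq_sum_vecMulVec.mp hNps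
  have hNij : ∀ i j, N i j = ∑ l, B l i * B l j := by
    intro i j
    have := congrArg (fun A => A i j) hB
    simpa [Matrix.sum_apply, Matrix.vecMulVec_apply] using this
  calc (0:ℝ) ≤ ∑ l, ∑ i, ∑ j, (B l i) * M i j * (B l j) := by
        exact Finset.sum_nonneg fun l _ => hM (fun i => B l i)
    _ = ∑ i, ∑ j, M i j * N i j := by
        rw [Finset.sum_comm]
        refine Finset.sum_congr rfl fun i _ => ?_
        rw [Finset.sum_comm]
        refine Finset.sum_congr rfl fun j _ => ?_
        rw [hNij i j, Finset.mul_sum]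
        refine Finset.sum_congr rfl fun l _ => by ring

lemma quad_expand {ι : Type*} [Fintype ι] {E : Type*} [NormedAddCommGroup E]
    [InnerProductSpace ℝ E] (v w : ι → E) (x : ι → ℝ) :
    ∑ i, ∑ j, x i * ⟪v i, w j⟫ * x j = ⟪∑ i, x i • v i, ∑ j, x j • w j⟫ := by
  simp only [sum_inner, inner_sum, real_inner_smul_left, real_inner_smul_right]
  rw [Finset.sum_comm]
  refine Finset.sum_congr rfl fun i _ => Finset.sum_congr rfl fun j _ => by ring

/-- Positive bounded symmetric operator vanishing quadratically at `z` kills `z`. -/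
lemma pos_form_eq_zero {E : Type*} [NormedAddCommGroup E] [InnerProductSpace ℝ E]
    (τ : E →L[ℝ] E) (hsymm : ∀ u v, ⟪τ u, v⟫ = ⟪u, τ v⟫) (hpos : ∀ u, 0 ≤ ⟪τ u, u⟫)
    {z : E} (hz : ⟪τ z, z⟫ = 0) : τ z = 0 := by
  have hallv : ∀ v : E, ⟪τ z, v⟫ = 0 := by
    intro v
    set a := ⟪τ z, v⟫ with haa
    set c := ⟪τ v, v⟫ with hcc
    have hc : 0 ≤ c := hpos v
    have hkey : ∀ s : ℝ, 0 ≤ 2 * s * a + s^2 * c := by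
      intro s
      have h0 := hpos (z + s • v)
      have hexp : ⟪τ (z + s • v), z + s • v⟫
          = ⟪τ z, z⟫ + s * ⟪τ z, v⟫ + s * ⟪τ v, z⟫ + s^2 * ⟪τ v, v⟫ := by
        simp only [map_add, map_smul, inner_add_left, inner_add_right,
          real_inner_smul_left, real_inner_smul_right]
        ring
      rw [hexp, hz] at h0
      have hvz : ⟪τ v, z⟫ = ⟪τ z, v⟫ := by
        rw [hsymm v z, real_inner_comm]
      rw [hvz] at h0
      calc (0:ℝ) ≤ 0 + s * a + s * a + s^2 * c := h0
        _ = 2 * s * a + s^2 * c := by ring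
    have hs := hkey (-a / (c + 1))
    have hc1 : (0:ℝ) < c + 1 := by linarith
    have ha0 : a^2 = 0 := by
      by_contra hne
      have ha2 : 0 < a^2 := lt_of_le_of_ne (sq_nonneg a) (Ne.symm hne)
      have heq : 2 * (-a / (c + 1)) * a + (-a / (c + 1))^2 * c
          = (-(a^2) * (c + 2)) / (c + 1)^2 := by
        field_simp
        ring
      rw [heq] at hs
      have hnum : (0:ℝ) ≤ -(a^2) * (c + 2) := by
        have := mul_nonneg hs (sq_nonneg (c+1))
        calc (0:ℝ) ≤ (-(a^2) * (c + 2)) / (c + 1)^2 * (c+1)^2 := this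
          _ = -(a^2) * (c + 2) := by field_simp
      nlinarith
    exact sq_eq_zero_iff.mp ha0
  have : ⟪τ z, τ z⟫ = 0 := hallv (τ z)
  exact inner_self_eq_zero.mp this

/-! ### The tensor product of bounded operators -/

section Tensor

variable {H K HK : Type*}
    [NormedAddCommGroup H] [InnerProductSpace ℝ H] [CompleteSpace H]
    [NormedAddCommGroup K] [InnerProductSpace ℝ K] [CompleteSpace K]
    [NormedAddCommGroup HK] [InnerProductSpace ℝ HK] [CompleteSpace HK]

omit [CompleteSpace H] [CompleteSpace K] [CompleteSpace HK] in
lemma lift_sum (t : H →ₗ[ℝ] K →ₗ[ℝ] HK) {ι : Type*} (s : Finset ι) (f : ι → H) (g : ι → K) :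
    TensorProduct.lift t (∑ i ∈ s, f i ⊗ₜ[ℝ] g i) = ∑ i ∈ s, t (f i) (g i) := by
  rw [map_sum]; simp [TensorProduct.lift.tmul]

omit [CompleteSpace H] [CompleteSpace K] [CompleteSpace HK] in
lemma inner_sum_sum (t : H →ₗ[ℝ] K →ₗ[ℝ] HK)
    (ht : ∀ (h h' : H) (k k' : K), ⟪t h k, t h' k'⟫ = ⟪h, h'⟫ * ⟪k, k'⟫)
    {ι : Type*} (s s' : Finset ι) (h h' : ι → H) (k k' : ι → K) :
    ⟪∑ i ∈ s, t (h i) (k i), ∑ j ∈ s', t (h' j) (k' j)⟫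
      = ∑ i ∈ s, ∑ j ∈ s', ⟪h i, h' j⟫ * ⟪k i, k' j⟫ := by
  rw [sum_inner]
  refine Finset.sum_congr rfl fun i _ => ?_
  rw [inner_sum]
  exact Finset.sum_congr rfl fun j _ => ht _ _ _ _

omit [CompleteSpace H] [CompleteSpace K] [CompleteSpace HK] in
lemma range_lift_eq (t : H →ₗ[ℝ] K →ₗ[ℝ] HK) :
    LinearMap.range (TensorProduct.lift t)
      = Submodule.span ℝ {z : HK | ∃ h k, z = t h k} := by
  apply le_antisymm
  · rintro _ ⟨u, rfl⟩
    induction u using TensorProduct.induction_on with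
    | zero => simp
    | tmul h k => exact Submodule.subset_span ⟨h, k, rfl⟩
    | add u v hu hv => rw [map_add]; exact Submodule.add_mem _ hu hv
  · rw [Submodule.span_le]
    rintro _ ⟨h, k, rfl⟩
    exact ⟨h ⊗ₜ[ℝ] k, rfl⟩

omit [CompleteSpace H] [CompleteSpace K] [CompleteSpace HK] in
lemma lift_map_left_bound (t : H →ₗ[ℝ] K →ₗ[ℝ] HK)
    (ht : ∀ (h h' : H) (k k' : K), ⟪t h k, t h' k'⟫ = ⟪h, h'⟫ * ⟪k, k'⟫)
    (P : H →L[ℝ] H) (u : TensorProduct ℝ H K) :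
    ‖TensorProduct.lift t (TensorProduct.map (P : H →ₗ[ℝ] H) LinearMap.id u)‖
      ≤ ‖P‖ * ‖TensorProduct.lift t u‖ := by
  classical
  obtain ⟨s, rfl⟩ := TensorProduct.exists_finset u
  have hmap : TensorProduct.map (P : H →ₗ[ℝ] H) LinearMap.id (∑ p ∈ s, p.1 ⊗ₜ[ℝ] p.2)
      = ∑ p ∈ s, (P p.1) ⊗ₜ[ℝ] p.2 := by
    rw [map_sum]; exact Finset.sum_congr rfl fun p _ => rfl
  rw [hmap, lift_sum, lift_sum]
  set a := ∑ p ∈ s, t (P p.1) p.2 with ha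
  set b := ∑ p ∈ s, t p.1 p.2 with hb
  have key : ‖a‖^2 ≤ (‖P‖ * ‖b‖)^2 := by
    have ha2 : ‖a‖^2 = ∑ i ∈ s, ∑ j ∈ s, ⟪P i.1, P j.1⟫ * ⟪i.2, j.2⟫ := by
      rw [← real_inner_self_eq_norm_sq, ha, inner_sum_sum t ht]
    have hb2 : ‖b‖^2 = ∑ i ∈ s, ∑ j ∈ s, ⟪i.1, j.1⟫ * ⟪i.2, j.2⟫ := by
      rw [← real_inner_self_eq_norm_sq, hb, inner_sum_sum t ht]
    have hdiff : 0 ≤ ∑ i ∈ s, ∑ j ∈ s,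
        (‖P‖^2 * ⟪i.1, j.1⟫ - ⟪P i.1, P j.1⟫) * ⟪i.2, j.2⟫ := by
      have conv : ∑ i ∈ s, ∑ j ∈ s,
          (‖P‖^2 * ⟪i.1, j.1⟫ - ⟪P i.1, P j.1⟫) * ⟪i.2, j.2⟫
          = ∑ i : ↥s, ∑ j : ↥s,
          (‖P‖^2 * ⟪(i:H×K).1, (j:H×K).1⟫ - ⟪P (i:H×K).1, P (j:H×K).1⟫) * ⟪(i:H×K).2, (j:H×K).2⟫ := by
        rw [← Finset.sum_coe_sort s]
        refine Finset.sum_congr rfl fun i _ => ?_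
        rw [← Finset.sum_coe_sort s]
      rw [conv]
      refine psd_pair_nonneg _ _ (fun i j => real_inner_comm _ _) ?_ ?_
      · intro x
        have e1 : ∑ i : ↥s, ∑ j : ↥s, x i * (‖P‖^2 * ⟪(i:H×K).1, (j:H×K).1⟫
            - ⟪P (i:H×K).1, P (j:H×K).1⟫) * x j
            = ‖P‖^2 * ⟪∑ i : ↥s, x i • (i:H×K).1, ∑ j : ↥s, x j • (j:H×K).1⟫
              - ⟪∑ i : ↥s, x i • P (i:H×K).1, ∑ j : ↥s, x j • P (j:H×K).1⟫ := by
          rw [← quad_expand, ← quad_expand, Finset.mul_sum, ← Finset.sum_sub_distrib]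
          refine Finset.sum_congr rfl fun i _ => ?_
          rw [Finset.mul_sum, ← Finset.sum_sub_distrib]
          refine Finset.sum_congr rfl fun j _ => by ring
        rw [e1]
        set w := ∑ i : ↥s, x i • (i:H×K).1 with hw
        have hPw : ∑ i : ↥s, x i • P (i:H×K).1 = P w := by
          rw [hw, map_sum]; exact Finset.sum_congr rfl fun i _ => (map_smul _ _ _).symm
        rw [hPw, real_inner_self_eq_norm_sq, real_inner_self_eq_norm_sq]
        have := P.le_opNorm w
        nlinarith [norm_nonneg (P w), norm_nonneg w, norm_nonneg P]
      · intro x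
        have e1 : ∑ i : ↥s, ∑ j : ↥s, x i * ⟪(i:H×K).2, (j:H×K).2⟫ * x j
            = ⟪∑ i : ↥s, x i • (i:H×K).2, ∑ j : ↥s, x j • (j:H×K).2⟫ := quad_expand _ _ _
        rw [e1, real_inner_self_eq_norm_sq]
        positivity
    have expand : ∑ i ∈ s, ∑ j ∈ s,
        (‖P‖^2 * ⟪i.1, j.1⟫ - ⟪P i.1, P j.1⟫) * ⟪i.2, j.2⟫
        = ‖P‖^2 * (∑ i ∈ s, ∑ j ∈ s, ⟪i.1, j.1⟫ * ⟪i.2, j.2⟫)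
          - ∑ i ∈ s, ∑ j ∈ s, ⟪P i.1, P j.1⟫ * ⟪i.2, j.2⟫ := by
      rw [Finset.mul_sum, ← Finset.sum_sub_distrib]
      refine Finset.sum_congr rfl fun i _ => ?_
      rw [Finset.mul_sum, ← Finset.sum_sub_distrib]
      refine Finset.sum_congr rfl fun j _ => by ring
    rw [expand] at hdiff
    have hsq : (‖P‖ * ‖b‖)^2 = ‖P‖^2 * ‖b‖^2 := by ring
    rw [hsq, ha2, hb2]; linarith
  have h1 : (0:ℝ) ≤ ‖P‖ * ‖b‖ := by positivity
  nlinarith [norm_nonneg a]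

omit [CompleteSpace H] [CompleteSpace K] [CompleteSpace HK] in
lemma lift_map_right_bound (t : H →ₗ[ℝ] K →ₗ[ℝ] HK)
    (ht : ∀ (h h' : H) (k k' : K), ⟪t h k, t h' k'⟫ = ⟪h, h'⟫ * ⟪k, k'⟫)
    (Q : K →L[ℝ] K) (u : TensorProduct ℝ H K) :
    ‖TensorProduct.lift t (TensorProduct.map LinearMap.id (Q : K →ₗ[ℝ] K) u)‖
      ≤ ‖Q‖ * ‖TensorProduct.lift t u‖ := by
  classical
  obtain ⟨s, rfl⟩ := TensorProduct.exists_finset u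
  have hmap : TensorProduct.map LinearMap.id (Q : K →ₗ[ℝ] K) (∑ p ∈ s, p.1 ⊗ₜ[ℝ] p.2)
      = ∑ p ∈ s, p.1 ⊗ₜ[ℝ] (Q p.2) := by
    rw [map_sum]; exact Finset.sum_congr rfl fun p _ => rfl
  rw [hmap, lift_sum, lift_sum]
  set a := ∑ p ∈ s, t p.1 (Q p.2) with ha
  set b := ∑ p ∈ s, t p.1 p.2 with hb
  have key : ‖a‖^2 ≤ (‖Q‖ * ‖b‖)^2 := by
    have ha2 : ‖a‖^2 = ∑ i ∈ s, ∑ j ∈ s, ⟪i.1, j.1⟫ * ⟪Q i.2, Q j.2⟫ := by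
      rw [← real_inner_self_eq_norm_sq, ha, inner_sum_sum t ht]
    have hb2 : ‖b‖^2 = ∑ i ∈ s, ∑ j ∈ s, ⟪i.1, j.1⟫ * ⟪i.2, j.2⟫ := by
      rw [← real_inner_self_eq_norm_sq, hb, inner_sum_sum t ht]
    have hdiff : 0 ≤ ∑ i ∈ s, ∑ j ∈ s,
        ⟪i.1, j.1⟫ * (‖Q‖^2 * ⟪i.2, j.2⟫ - ⟪Q i.2, Q j.2⟫) := by
      have conv : ∑ i ∈ s, ∑ j ∈ s, ⟪i.1, j.1⟫ * (‖Q‖^2 * ⟪i.2, j.2⟫ - ⟪Q i.2, Q j.2⟫)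
          = ∑ i : ↥s, ∑ j : ↥s, ⟪(i:H×K).1, (j:H×K).1⟫
              * (‖Q‖^2 * ⟪(i:H×K).2, (j:H×K).2⟫ - ⟪Q (i:H×K).2, Q (j:H×K).2⟫) := by
        rw [← Finset.sum_coe_sort s]
        refine Finset.sum_congr rfl fun i _ => ?_
        rw [← Finset.sum_coe_sort s]
      rw [conv]
      refine psd_pair_nonneg _ _ ?_ ?_ ?_
      · intro i j
        rw [real_inner_comm ((i:H×K).2), real_inner_comm (Q (i:H×K).2)]
      · intro x
        have e1 : ∑ i : ↥s, ∑ j : ↥s, x i * ⟪(i:H×K).1, (j:H×K).1⟫ * x j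
            = ⟪∑ i : ↥s, x i • (i:H×K).1, ∑ j : ↥s, x j • (j:H×K).1⟫ := quad_expand _ _ _
        rw [e1, real_inner_self_eq_norm_sq]; positivity
      · intro x
        have e1 : ∑ i : ↥s, ∑ j : ↥s, x i * (‖Q‖^2 * ⟪(i:H×K).2, (j:H×K).2⟫
            - ⟪Q (i:H×K).2, Q (j:H×K).2⟫) * x j
            = ‖Q‖^2 * ⟪∑ i : ↥s, x i • (i:H×K).2, ∑ j : ↥s, x j • (j:H×K).2⟫
              - ⟪∑ i : ↥s, x i • Q (i:H×K).2, ∑ j : ↥s, x j • Q (j:H×K).2⟫ := by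
          rw [← quad_expand, ← quad_expand, Finset.mul_sum, ← Finset.sum_sub_distrib]
          refine Finset.sum_congr rfl fun i _ => ?_
          rw [Finset.mul_sum, ← Finset.sum_sub_distrib]
          refine Finset.sum_congr rfl fun j _ => by ring
        rw [e1]
        set w := ∑ i : ↥s, x i • (i:H×K).2 with hw
        have hQw : ∑ i : ↥s, x i • Q (i:H×K).2 = Q w := by
          rw [hw, map_sum]; exact Finset.sum_congr rfl fun i _ => (map_smul _ _ _).symm
        rw [hQw, real_inner_self_eq_norm_sq, real_inner_self_eq_norm_sq]
        have := Q.le_opNorm w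
        nlinarith [norm_nonneg (Q w), norm_nonneg w, norm_nonneg Q]
    have expand : ∑ i ∈ s, ∑ j ∈ s, ⟪i.1, j.1⟫ * (‖Q‖^2 * ⟪i.2, j.2⟫ - ⟪Q i.2, Q j.2⟫)
        = ‖Q‖^2 * (∑ i ∈ s, ∑ j ∈ s, ⟪i.1, j.1⟫ * ⟪i.2, j.2⟫)
          - ∑ i ∈ s, ∑ j ∈ s, ⟪i.1, j.1⟫ * ⟪Q i.2, Q j.2⟫ := by
      rw [Finset.mul_sum, ← Finset.sum_sub_distrib]
      refine Finset.sum_congr rfl fun i _ => ?_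
      rw [Finset.mul_sum, ← Finset.sum_sub_distrib]
      refine Finset.sum_congr rfl fun j _ => by ring
    rw [expand] at hdiff
    have hsq : (‖Q‖ * ‖b‖)^2 = ‖Q‖^2 * ‖b‖^2 := by ring
    rw [hsq, ha2, hb2]; linarith
  have h1 : (0:ℝ) ≤ ‖Q‖ * ‖b‖ := by positivity
  nlinarith [norm_nonneg a]

omit [CompleteSpace H] [CompleteSpace K] [CompleteSpace HK] in
lemma lift_map_bound (t : H →ₗ[ℝ] K →ₗ[ℝ] HK)
    (ht : ∀ (h h' : H) (k k' : K), ⟪t h k, t h' k'⟫ = ⟪h, h'⟫ * ⟪k, k'⟫)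
    (P : H →L[ℝ] H) (Q : K →L[ℝ] K) (u : TensorProduct ℝ H K) :
    ‖TensorProduct.lift t (TensorProduct.map (P : H →ₗ[ℝ] H) (Q : K →ₗ[ℝ] K) u)‖
      ≤ (‖P‖ * ‖Q‖) * ‖TensorProduct.lift t u‖ := by
  have hco : TensorProduct.map (P : H →ₗ[ℝ] H) (Q : K →ₗ[ℝ] K) u
      = TensorProduct.map (P : H →ₗ[ℝ] H) LinearMap.id
          (TensorProduct.map LinearMap.id (Q : K →ₗ[ℝ] K) u) := by
    rw [← LinearMap.comp_apply, ← TensorProduct.map_comp]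
    simp
  rw [hco]
  calc ‖TensorProduct.lift t (TensorProduct.map (P : H →ₗ[ℝ] H) LinearMap.id
          (TensorProduct.map LinearMap.id (Q : K →ₗ[ℝ] K) u))‖
      ≤ ‖P‖ * ‖TensorProduct.lift t (TensorProduct.map LinearMap.id (Q : K →ₗ[ℝ] K) u)‖ :=
        lift_map_left_bound t ht P _
    _ ≤ ‖P‖ * (‖Q‖ * ‖TensorProduct.lift t u‖) := by
        have := lift_map_right_bound t ht Q u
        exact mul_le_mul_of_nonneg_left this (norm_nonneg P)
    _ = (‖P‖ * ‖Q‖) * ‖TensorProduct.lift t u‖ := by ring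

omit [CompleteSpace H] [CompleteSpace K] [CompleteSpace HK] in
lemma tensor_ker_le (t : H →ₗ[ℝ] K →ₗ[ℝ] HK)
    (ht : ∀ (h h' : H) (k k' : K), ⟪t h k, t h' k'⟫ = ⟪h, h'⟫ * ⟪k, k'⟫)
    (P : H →L[ℝ] H) (Q : K →L[ℝ] K) :
    LinearMap.ker (TensorProduct.lift t) ≤
      LinearMap.ker (TensorProduct.lift t ∘ₗ
        TensorProduct.map (P : H →ₗ[ℝ] H) (Q : K →ₗ[ℝ] K)) := by
  intro u hu
  rw [LinearMap.mem_ker] at hu ⊢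
  have h2 := lift_map_bound t ht P Q u
  rw [hu] at h2
  simp only [norm_zero, mul_zero] at h2
  simpa using norm_le_zero_iff.mp h2

/-- `P ⊗ Q` as a linear map on the range of the lift. -/
noncomputable def tensorAuxLin (t : H →ₗ[ℝ] K →ₗ[ℝ] HK)
    (ht : ∀ (h h' : H) (k k' : K), ⟪t h k, t h' k'⟫ = ⟪h, h'⟫ * ⟪k, k'⟫)
    (P : H →L[ℝ] H) (Q : K →L[ℝ] K) :
    ↥(LinearMap.range (TensorProduct.lift t)) →ₗ[ℝ] HK :=
  (Submodule.liftQ _ (TensorProduct.lift t ∘ₗ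
      TensorProduct.map (P : H →ₗ[ℝ] H) (Q : K →ₗ[ℝ] K)) (tensor_ker_le t ht P Q)) ∘ₗ
    ((TensorProduct.lift t).quotKerEquivRange.symm : _ →ₗ[ℝ] _)

omit [CompleteSpace H] [CompleteSpace K] [CompleteSpace HK] in
lemma tensorAuxLin_apply (t : H →ₗ[ℝ] K →ₗ[ℝ] HK)
    (ht : ∀ (h h' : H) (k k' : K), ⟪t h k, t h' k'⟫ = ⟪h, h'⟫ * ⟪k, k'⟫)
    (P : H →L[ℝ] H) (Q : K →L[ℝ] K) (u : TensorProduct ℝ H K)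
    (hmem : TensorProduct.lift t u ∈ LinearMap.range (TensorProduct.lift t)) :
    tensorAuxLin t ht P Q ⟨TensorProduct.lift t u, hmem⟩
      = TensorProduct.lift t (TensorProduct.map (P : H →ₗ[ℝ] H) (Q : K →ₗ[ℝ] K) u) := by
  rw [tensorAuxLin, LinearMap.comp_apply]
  rw [show ((TensorProduct.lift t).quotKerEquivRange.symm : _ →ₗ[ℝ] _)
        (⟨TensorProduct.lift t u, hmem⟩ : LinearMap.range (TensorProduct.lift t))
      = (LinearMap.ker (TensorProduct.lift t)).mkQ u from
    LinearMap.quotKerEquivRange_symm_apply_image (TensorProduct.lift t) u hmem]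
  rw [Submodule.mkQ_apply, Submodule.liftQ_apply]
  rfl

omit [CompleteSpace H] [CompleteSpace K] [CompleteSpace HK] in
lemma tensorAuxLin_bound (t : H →ₗ[ℝ] K →ₗ[ℝ] HK)
    (ht : ∀ (h h' : H) (k k' : K), ⟪t h k, t h' k'⟫ = ⟪h, h'⟫ * ⟪k, k'⟫)
    (P : H →L[ℝ] H) (Q : K →L[ℝ] K)
    (v : ↥(LinearMap.range (TensorProduct.lift t))) :
    ‖tensorAuxLin t ht P Q v‖ ≤ (‖P‖ * ‖Q‖) * ‖v‖ := by
  obtain ⟨v, u, rfl⟩ := v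
  rw [tensorAuxLin_apply t ht P Q u ⟨u, rfl⟩]
  exact lift_map_bound t ht P Q u

omit [CompleteSpace H] [CompleteSpace K] [CompleteSpace HK] in
lemma denseRange_rangeLift (t : H →ₗ[ℝ] K →ₗ[ℝ] HK)
    (htdense :
      Dense ((Submodule.span ℝ {z : HK | ∃ h k, z = t h k} : Submodule ℝ HK) : Set HK)) :
    DenseRange ⇑(LinearMap.range (TensorProduct.lift t)).subtypeL := by
  have : Dense ((LinearMap.range (TensorProduct.lift t) : Submodule ℝ HK) : Set HK) := by
    rw [range_lift_eq t]; exact htdense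
  exact this.denseRange_val

/-- The tensor product `P ⊗ Q` of bounded operators, as a bounded operator on `HK`. -/
noncomputable def tensorCLM (t : H →ₗ[ℝ] K →ₗ[ℝ] HK)
    (ht : ∀ (h h' : H) (k k' : K), ⟪t h k, t h' k'⟫ = ⟪h, h'⟫ * ⟪k, k'⟫)
    (htdense :
      Dense ((Submodule.span ℝ {z : HK | ∃ h k, z = t h k} : Submodule ℝ HK) : Set HK))
    (P : H →L[ℝ] H) (Q : K →L[ℝ] K) : HK →L[ℝ] HK :=
  (LinearMap.mkContinuous (tensorAuxLin t ht P Q) (‖P‖ * ‖Q‖)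
      (tensorAuxLin_bound t ht P Q)).extend
    (LinearMap.range (TensorProduct.lift t)).subtypeL

lemma tensorCLM_lift (t : H →ₗ[ℝ] K →ₗ[ℝ] HK)
    (ht : ∀ (h h' : H) (k k' : K), ⟪t h k, t h' k'⟫ = ⟪h, h'⟫ * ⟪k, k'⟫)
    (htdense :
      Dense ((Submodule.span ℝ {z : HK | ∃ h k, z = t h k} : Submodule ℝ HK) : Set HK))
    (P : H →L[ℝ] H) (Q : K →L[ℝ] K) (u : TensorProduct ℝ H K) :
    tensorCLM t ht htdense P Q (TensorProduct.lift t u)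
      = TensorProduct.lift t
          (TensorProduct.map (P : H →ₗ[ℝ] H) (Q : K →ₗ[ℝ] K) u) := by
  have hmem : TensorProduct.lift t u ∈ LinearMap.range (TensorProduct.lift t) := ⟨u, rfl⟩
  have h0 : TensorProduct.lift t u
      = (LinearMap.range (TensorProduct.lift t)).subtypeL
        (⟨TensorProduct.lift t u, hmem⟩ : LinearMap.range (TensorProduct.lift t)) := rfl
  rw [tensorCLM, h0, ContinuousLinearMap.extend_eq (h_dense := denseRange_rangeLift t htdense)
    (h_e := isUniformEmbedding_subtype_val.isUniformInducing), LinearMap.mkContinuous_apply,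
    tensorAuxLin_apply t ht P Q u hmem]

lemma tensorCLM_apply (t : H →ₗ[ℝ] K →ₗ[ℝ] HK)
    (ht : ∀ (h h' : H) (k k' : K), ⟪t h k, t h' k'⟫ = ⟪h, h'⟫ * ⟪k, k'⟫)
    (htdense :
      Dense ((Submodule.span ℝ {z : HK | ∃ h k, z = t h k} : Submodule ℝ HK) : Set HK))
    (P : H →L[ℝ] H) (Q : K →L[ℝ] K) (h : H) (k : K) :
    tensorCLM t ht htdense P Q (t h k) = t (P h) (Q k) := by
  have h1 := tensorCLM_lift t ht htdense P Q (h ⊗ₜ[ℝ] k)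
  simpa using h1

omit [CompleteSpace H] [CompleteSpace K] [CompleteSpace HK] in
lemma eq_zero_of_inner_elem (t : H →ₗ[ℝ] K →ₗ[ℝ] HK)
    (htdense :
      Dense ((Submodule.span ℝ {z : HK | ∃ h k, z = t h k} : Submodule ℝ HK) : Set HK))
    {w : HK} (hw : ∀ h k, ⟪w, t h k⟫ = 0) : w = 0 := by
  refine htdense.eq_of_inner_left ℝ fun v hv => ?_
  simp only [inner_zero_left]
  refine Submodule.span_induction ?_ ?_ ?_ ?_ hv
  · rintro _ ⟨h, k, rfl⟩; exact hw h k
  · simp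
  · intro a b _ _ ha hb; rw [inner_add_right, ha, hb]; ring
  · intro r a _ ha; rw [real_inner_smul_right, ha]; ring

lemma tensorCLM_pos (t : H →ₗ[ℝ] K →ₗ[ℝ] HK)
    (ht : ∀ (h h' : H) (k k' : K), ⟪t h k, t h' k'⟫ = ⟪h, h'⟫ * ⟪k, k'⟫)
    (htdense :
      Dense ((Submodule.span ℝ {z : HK | ∃ h k, z = t h k} : Submodule ℝ HK) : Set HK))
    (P : H →L[ℝ] H) (Q : K →L[ℝ] K)
    (hPsym : ∀ x y, ⟪P x, y⟫ = ⟪x, P y⟫) (hQsym : ∀ x y, ⟪Q x, y⟫ = ⟪x, Q y⟫)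
    (hP : ∀ x, 0 ≤ ⟪P x, x⟫) (hQ : ∀ x, 0 ≤ ⟪Q x, x⟫) (w : HK) :
    0 ≤ ⟪tensorCLM t ht htdense P Q w, w⟫ := by
  classical
  set τ := tensorCLM t ht htdense P Q with hτ
  have hclosed : IsClosed {w : HK | 0 ≤ ⟪τ w, w⟫} :=
    isClosed_le continuous_const ((τ.continuous).inner continuous_id)
  have hsub : ((Submodule.span ℝ {z : HK | ∃ h k, z = t h k} : Submodule ℝ HK) : Set HK)
      ⊆ {w : HK | 0 ≤ ⟪τ w, w⟫} := by
    intro w hw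
    rw [← range_lift_eq t] at hw
    obtain ⟨u, rfl⟩ := hw
    obtain ⟨s, rfl⟩ := TensorProduct.exists_finset u
    have hmap : TensorProduct.map (P : H →ₗ[ℝ] H) (Q : K →ₗ[ℝ] K)
        (∑ p ∈ s, p.1 ⊗ₜ[ℝ] p.2) = ∑ p ∈ s, (P p.1) ⊗ₜ[ℝ] (Q p.2) := by
      rw [map_sum]; exact Finset.sum_congr rfl fun p _ => rfl
    show 0 ≤ ⟪τ (TensorProduct.lift t (∑ p ∈ s, p.1 ⊗ₜ[ℝ] p.2)), _⟫
    rw [hτ, tensorCLM_lift t ht htdense P Q, hmap, lift_sum, lift_sum,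
      inner_sum_sum t ht]
    have conv : ∑ i ∈ s, ∑ j ∈ s, ⟪P i.1, j.1⟫ * ⟪Q i.2, j.2⟫
        = ∑ i : ↥s, ∑ j : ↥s, ⟪P (i:H×K).1, (j:H×K).1⟫ * ⟪Q (i:H×K).2, (j:H×K).2⟫ := by
      rw [← Finset.sum_coe_sort s]
      exact Finset.sum_congr rfl fun i _ => (Finset.sum_coe_sort s _).symm
    rw [conv]
    refine psd_pair_nonneg _ _ ?_ ?_ ?_
    · intro i j
      rw [hQsym, real_inner_comm]
    · intro x
      have e1 : ∑ i : ↥s, ∑ j : ↥s, x i * ⟪P (i:H×K).1, (j:H×K).1⟫ * x j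
          = ⟪∑ i : ↥s, x i • P (i:H×K).1, ∑ j : ↥s, x j • (j:H×K).1⟫ := quad_expand _ _ _
      rw [e1]
      have e2 : ∑ i : ↥s, x i • P (i:H×K).1 = P (∑ i : ↥s, x i • (i:H×K).1) := by
        rw [map_sum]; exact Finset.sum_congr rfl fun i _ => (map_smul _ _ _).symm
      rw [e2]; exact hP _
    · intro x
      have e1 : ∑ i : ↥s, ∑ j : ↥s, x i * ⟪Q (i:H×K).2, (j:H×K).2⟫ * x j
          = ⟪∑ i : ↥s, x i • Q (i:H×K).2, ∑ j : ↥s, x j • (j:H×K).2⟫ := quad_expand _ _ _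
      rw [e1]
      have e2 : ∑ i : ↥s, x i • Q (i:H×K).2 = Q (∑ i : ↥s, x i • (i:H×K).2) := by
        rw [map_sum]; exact Finset.sum_congr rfl fun i _ => (map_smul _ _ _).symm
      rw [e2]; exact hQ _
  have hcl : closure ((Submodule.span ℝ {z : HK | ∃ h k, z = t h k} : Submodule ℝ HK) : Set HK)
      ⊆ {w : HK | 0 ≤ ⟪τ w, w⟫} := hclosed.closure_subset_iff.mpr hsub
  rw [htdense.closure_eq] at hcl
  exact hcl (Set.mem_univ w)

lemma tensorCLM_symm_elem (t : H →ₗ[ℝ] K →ₗ[ℝ] HK)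
    (ht : ∀ (h h' : H) (k k' : K), ⟪t h k, t h' k'⟫ = ⟪h, h'⟫ * ⟪k, k'⟫)
    (htdense :
      Dense ((Submodule.span ℝ {z : HK | ∃ h k, z = t h k} : Submodule ℝ HK) : Set HK))
    (P : H →L[ℝ] H) (Q : K →L[ℝ] K)
    (hPsym : ∀ x y, ⟪P x, y⟫ = ⟪x, P y⟫) (hQsym : ∀ x y, ⟪Q x, y⟫ = ⟪x, Q y⟫)
    (z : HK) (h : H) (k : K) :
    ⟪tensorCLM t ht htdense P Q z, t h k⟫ = ⟪z, t (P h) (Q k)⟫ := by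
  classical
  set τ := tensorCLM t ht htdense P Q with hτ
  have hclosed : IsClosed {z : HK | ⟪τ z, t h k⟫ = ⟪z, t (P h) (Q k)⟫} :=
    isClosed_eq ((τ.continuous).inner continuous_const)
      (continuous_id.inner continuous_const)
  have hsub : ((Submodule.span ℝ {z : HK | ∃ h k, z = t h k} : Submodule ℝ HK) : Set HK)
      ⊆ {z : HK | ⟪τ z, t h k⟫ = ⟪z, t (P h) (Q k)⟫} := by
    intro z hz
    rw [← range_lift_eq t] at hz
    obtain ⟨u, rfl⟩ := hz
    obtain ⟨s, rfl⟩ := TensorProduct.exists_finset u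
    have hmap : TensorProduct.map (P : H →ₗ[ℝ] H) (Q : K →ₗ[ℝ] K)
        (∑ p ∈ s, p.1 ⊗ₜ[ℝ] p.2) = ∑ p ∈ s, (P p.1) ⊗ₜ[ℝ] (Q p.2) := by
      rw [map_sum]; exact Finset.sum_congr rfl fun p _ => rfl
    show ⟪τ (TensorProduct.lift t (∑ p ∈ s, p.1 ⊗ₜ[ℝ] p.2)), t h k⟫ = _
    rw [hτ, tensorCLM_lift t ht htdense P Q, hmap, lift_sum, lift_sum, sum_inner, sum_inner]
    refine Finset.sum_congr rfl fun p _ => ?_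
    rw [ht, ht, hPsym, hQsym]
  have hcl : closure ((Submodule.span ℝ {z : HK | ∃ h k, z = t h k} : Submodule ℝ HK) : Set HK)
      ⊆ {z : HK | ⟪τ z, t h k⟫ = ⟪z, t (P h) (Q k)⟫} := hclosed.closure_subset_iff.mpr hsub
  rw [htdense.closure_eq] at hcl
  exact hcl (Set.mem_univ z)

lemma tensorCLM_symm (t : H →ₗ[ℝ] K →ₗ[ℝ] HK)
    (ht : ∀ (h h' : H) (k k' : K), ⟪t h k, t h' k'⟫ = ⟪h, h'⟫ * ⟪k, k'⟫)
    (htdense :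
      Dense ((Submodule.span ℝ {z : HK | ∃ h k, z = t h k} : Submodule ℝ HK) : Set HK))
    (P : H →L[ℝ] H) (Q : K →L[ℝ] K)
    (hPsym : ∀ x y, ⟪P x, y⟫ = ⟪x, P y⟫) (hQsym : ∀ x y, ⟪Q x, y⟫ = ⟪x, Q y⟫)
    (z w : HK) :
    ⟪tensorCLM t ht htdense P Q z, w⟫ = ⟪z, tensorCLM t ht htdense P Q w⟫ := by
  classical
  set τ := tensorCLM t ht htdense P Q with hτ
  have hclosed : IsClosed {w : HK | ⟪τ z, w⟫ = ⟪z, τ w⟫} :=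
    isClosed_eq (continuous_const.inner continuous_id)
      (continuous_const.inner τ.continuous)
  have hsub : ((Submodule.span ℝ {z : HK | ∃ h k, z = t h k} : Submodule ℝ HK) : Set HK)
      ⊆ {w : HK | ⟪τ z, w⟫ = ⟪z, τ w⟫} := by
    intro w hw
    refine Submodule.span_induction ?_ ?_ ?_ ?_ hw
    · rintro _ ⟨h, k, rfl⟩
      show ⟪τ z, t h k⟫ = ⟪z, τ (t h k)⟫
      rw [hτ, tensorCLM_apply t ht htdense P Q h k,
        tensorCLM_symm_elem t ht htdense P Q hPsym hQsym z h k]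
    · simp
    · intro a b _ _ ha hb
      simp only [Set.mem_setOf_eq] at ha hb ⊢
      rw [map_add, inner_add_right, inner_add_right, ha, hb]
    · intro r a _ ha
      simp only [Set.mem_setOf_eq] at ha ⊢
      rw [map_smul, real_inner_smul_right, real_inner_smul_right, ha]
  have hcl : closure ((Submodule.span ℝ {z : HK | ∃ h k, z = t h k} : Submodule ℝ HK) : Set HK)
      ⊆ {w : HK | ⟪τ z, w⟫ = ⟪z, τ w⟫} := hclosed.closure_subset_iff.mpr hsub
  rw [htdense.closure_eq] at hcl
  exact hcl (Set.mem_univ w)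

end Tensor

/-! ### The resolvent of a nonnegative self-adjoint operator -/

section Resolvent

variable {H : Type*} [NormedAddCommGroup H] [InnerProductSpace ℝ H] [CompleteSpace H]
variable {A : H →ₗ.[ℝ] H}

lemma weak_mem_graph (hAdense : Dense (A.domain : Set H)) (hAsa : A.adjoint = A)
    {x w : H} (hx : ∀ u : A.domain, ⟪x, A u⟫ = ⟪w, (u : H)⟫) : (x, w) ∈ A.graph := by
  have hx' : x ∈ A.adjoint.domain :=
    LinearPMap.mem_adjoint_domain_of_exists x ⟨w, fun u => (hx u).symm⟩
  have hval : A.adjoint ⟨x, hx'⟩ = w :=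
    LinearPMap.adjoint_apply_eq hAdense ⟨x, hx'⟩ (fun u => (hx u).symm)
  have : (x, w) ∈ A.adjoint.graph := A.adjoint.mem_graph_iff.mpr ⟨⟨x, hx'⟩, rfl, hval⟩
  rwa [hAsa] at this

lemma symm_of_selfAdjoint (hAdense : Dense (A.domain : Set H)) (hAsa : A.adjoint = A)
    (u v : A.domain) : ⟪A u, (v : H)⟫ = ⟪(u : H), A v⟫ := by
  have h := LinearPMap.adjoint_isFormalAdjoint hAdense
  rw [hAsa] at h
  exact h u v

/-- Existence of the resolvent `(A + 1)⁻¹` for a nonnegative self-adjoint operator. -/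
lemma resolvent_exists (A : H →ₗ.[ℝ] H) (hAdense : Dense (A.domain : Set H))
    (hAsa : A.adjoint = A) (hAnn : ∀ x : A.domain, 0 ≤ ⟪A x, (x : H)⟫) :
    ∃ R : H →L[ℝ] H,
      (∀ x, (R x, x - R x) ∈ A.graph) ∧
      (∀ x y, ⟪R x, y⟫ = ⟪x, R y⟫) ∧
      (∀ x, 0 ≤ ⟪R x, x⟫) ∧
      (∀ x, 0 ≤ ⟪x - R x, x⟫) ∧
      (∀ x, R x = 0 → x = 0) ∧
      (∀ x, R x = x ↔ (x, 0) ∈ A.graph) := by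
  classical
  have hsym := symm_of_selfAdjoint hAdense hAsa
  set F : A.domain →ₗ[ℝ] H := A.toFun + A.domain.subtype with hF
  have hFapp : ∀ u : A.domain, F u = A u + (u : H) := fun u => rfl
  have hco : ∀ u : A.domain, ‖(u : H)‖ ≤ ‖F u‖ := by
    intro u
    have h1 : ‖(u:H)‖^2 ≤ ⟪F u, (u:H)⟫ := by
      rw [hFapp, inner_add_left, real_inner_self_eq_norm_sq]
      have := hAnn u
      linarith
    have h2 : ⟪F u, (u:H)⟫ ≤ ‖F u‖ * ‖(u:H)‖ := real_inner_le_norm _ _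
    rcases eq_or_lt_of_le (norm_nonneg (u:H)) with h3 | h3
    · rw [← h3]; exact norm_nonneg _
    · nlinarith
  have hinj : ∀ u : A.domain, F u = 0 → u = 0 := by
    intro u hu
    have h4 := hco u
    rw [hu, norm_zero] at h4
    have : ‖(u:H)‖ = 0 := le_antisymm h4 (norm_nonneg _)
    exact Subtype.ext (norm_eq_zero.mp this)
  have hclosed : IsClosed ((LinearMap.range F : Submodule ℝ H) : Set H) := by
    apply IsSeqClosed.isClosed
    intro ys y hys hlim
    choose us hus using hys
    have hcauchy : CauchySeq (fun n => ((us n : A.domain) : H)) := by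
      have hys_c : CauchySeq ys := hlim.cauchySeq
      rw [Metric.cauchySeq_iff] at hys_c ⊢
      intro ε hε
      obtain ⟨N, hN⟩ := hys_c ε hε
      refine ⟨N, fun m hm n hn => ?_⟩
      have hd : dist ((us m : H)) ((us n : H)) ≤ dist (ys m) (ys n) := by
        rw [dist_eq_norm, dist_eq_norm, ← hus m, ← hus n]
        have h5 : F (us m) - F (us n) = F (us m - us n) := (map_sub F _ _).symm
        rw [h5]
        simpa using hco (us m - us n)
      exact lt_of_le_of_lt hd (hN m hm n hn)
    obtain ⟨x, hx⟩ := cauchySeq_tendsto_of_complete hcauchy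
    have hAlim : Filter.Tendsto (fun n => A (us n)) Filter.atTop (nhds (y - x)) := by
      have he : (fun n => A (us n)) = fun n => ys n - (us n : H) := by
        funext n
        rw [← hus n, hFapp]; abel
      rw [he]
      exact hlim.sub hx
    have hweak : ∀ v : A.domain, ⟪x, A v⟫ = ⟪y - x, (v : H)⟫ := by
      intro v
      have t1 : Filter.Tendsto (fun n => ⟪((us n : A.domain) : H), A v⟫)
          Filter.atTop (nhds ⟪x, A v⟫) := hx.inner tendsto_const_nhds
      have t2 : Filter.Tendsto (fun n => ⟪A (us n), (v : H)⟫)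
          Filter.atTop (nhds ⟪y - x, (v : H)⟫) := hAlim.inner tendsto_const_nhds
      have he : (fun n => ⟪((us n : A.domain) : H), A v⟫) = fun n => ⟪A (us n), (v : H)⟫ := by
        funext n; rw [hsym]
      rw [he] at t1
      exact tendsto_nhds_unique t1 t2
    obtain ⟨w, hw1, hw2⟩ := A.mem_graph_iff.mp (weak_mem_graph hAdense hAsa hweak)
    refine ⟨w, ?_⟩
    rw [hFapp]
    simp only at hw1 hw2
    rw [hw1, hw2]; abel
  have horth : (LinearMap.range F : Submodule ℝ H)ᗮ = ⊥ := by
    rw [Submodule.eq_bot_iff]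
    intro u hu
    have hu' : ∀ w : A.domain, ⟪u, A w⟫ = ⟪-u, (w : H)⟫ := by
      intro w
      have h0 : ⟪F w, u⟫ = 0 := hu (F w) ⟨w, rfl⟩
      rw [hFapp, inner_add_left] at h0
      rw [show ⟪u, A w⟫ = ⟪A w, u⟫ from real_inner_comm _ _,
        show ⟪(-u : H), (w:H)⟫ = -⟪(w:H), u⟫ from by rw [inner_neg_left, real_inner_comm]]
      linarith
    obtain ⟨w, hw1, hw2⟩ := A.mem_graph_iff.mp (weak_mem_graph hAdense hAsa hu')
    simp only at hw1 hw2
    have h1 := hAnn w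
    rw [hw1, hw2, inner_neg_left, real_inner_self_eq_norm_sq] at h1
    have : ‖u‖ = 0 := by nlinarith [norm_nonneg u]
    exact norm_eq_zero.mp this
  have hsurj : ∀ y : H, ∃ u : A.domain, F u = y := by
    intro y
    haveI : CompleteSpace (LinearMap.range F : Submodule ℝ H) := hclosed.completeSpace_coe
    have htop : (LinearMap.range F : Submodule ℝ H) = ⊤ := by
      have h6 := Submodule.sup_orthogonal_of_hasOrthogonalProjection
        (K := (LinearMap.range F : Submodule ℝ H))
      rw [horth, sup_bot_eq] at h6
      exact h6
    have : y ∈ LinearMap.range F := by rw [htop]; trivial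
    exact this
  have hbij : Function.Bijective F := by
    constructor
    · intro a b hab
      have h7 : F (a - b) = 0 := by rw [map_sub, hab, sub_self]
      have := hinj _ h7
      rwa [sub_eq_zero] at this
    · exact hsurj
  set e := LinearEquiv.ofBijective F hbij with he
  have heapp : ∀ u : A.domain, e u = F u := fun u => rfl
  set R₀ : H →ₗ[ℝ] H := A.domain.subtype ∘ₗ e.symm.toLinearMap with hR₀
  have hR₀app : ∀ y, R₀ y = ((e.symm y : A.domain) : H) := fun y => rfl
  have hFes : ∀ y, F (e.symm y) = y := fun y => e.apply_symm_apply y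
  have hbound : ∀ y, ‖R₀ y‖ ≤ 1 * ‖y‖ := by
    intro y
    have h8 := hco (e.symm y)
    rw [hFes y] at h8
    rw [hR₀app, one_mul]
    exact h8
  set R : H →L[ℝ] H := R₀.mkContinuous 1 hbound with hR
  have hRapp : ∀ y, R y = ((e.symm y : A.domain) : H) := fun y => rfl
  have hAR : ∀ y, A (e.symm y) = y - R y := by
    intro y
    have h9 : A (e.symm y) + ((e.symm y : A.domain) : H) = y := by
      rw [← hFapp, hFes]
    rw [hRapp]
    exact eq_sub_of_add_eq h9
  have hinner_FF : ∀ u v : A.domain, ⟪(u:H), F v⟫ = ⟪F u, (v:H)⟫ := by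
    intro u v
    rw [hFapp u, hFapp v, inner_add_right, inner_add_left, hsym u v]
  refine ⟨R, ?_, ?_, ?_, ?_, ?_, ?_⟩
  · -- graph membership
    intro x
    have hg := A.mem_graph (e.symm x)
    rw [hAR x] at hg
    rw [show ((e.symm x : A.domain) : H) = R x from (hRapp x).symm] at hg
    exact hg
  · -- symmetry
    intro x y
    set u := e.symm x with hu
    set v := e.symm y with hv
    calc ⟪R x, y⟫ = ⟪(u:H), F v⟫ := by rw [hRapp x, hFes y]
      _ = ⟪F u, (v:H)⟫ := hinner_FF u v
      _ = ⟪x, R y⟫ := by rw [hFes x, hRapp y]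
  · -- positivity of R
    intro x
    set u := e.symm x with hu
    have hc : ⟪R x, x⟫ = ⟪(u:H), F u⟫ := by rw [hRapp x, hFes x]
    rw [hc, hFapp, inner_add_right, real_inner_self_eq_norm_sq]
    have h1 := hAnn u
    have h2 : ⟪(u:H), A u⟫ = ⟪A u, (u:H)⟫ := real_inner_comm _ _
    nlinarith [sq_nonneg ‖(u:H)‖]
  · -- positivity of 1 - R
    intro x
    set u := e.symm x with hu
    have h0 : x - R x = A u := (hAR x).symm
    have hc : ⟪x - R x, x⟫ = ⟪A u, F u⟫ := by rw [h0, hFes x]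
    rw [hc, hFapp, inner_add_right]
    have h1 := hAnn u
    have h2 : (0:ℝ) ≤ ⟪A u, A u⟫ := real_inner_self_nonneg
    linarith
  · -- injectivity
    intro x hx
    rw [hRapp] at hx
    have h1 : e.symm x = 0 := Subtype.ext hx
    have h2 := congrArg e h1
    rw [e.apply_symm_apply, map_zero] at h2
    exact h2
  · -- fixed points
    intro x
    constructor
    · intro hx
      have hg := A.mem_graph (e.symm x)
      rw [hAR x, hx, sub_self] at hg
      rw [show ((e.symm x : A.domain) : H) = R x from (hRapp x).symm, hx] at hg
      exact hg
    · intro hg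
      obtain ⟨w, hw1, hw2⟩ := A.mem_graph_iff.mp hg
      simp only at hw1 hw2
      have hFx : F w = x := by
        rw [hFapp, hw1, hw2, zero_add]
      have h1 : e.symm x = w := by
        rw [LinearEquiv.symm_apply_eq, heapp, hFx]
      rw [hRapp, h1, hw1]

end Resolvent

/-! ### The main theorem -/

set_option maxHeartbeats 1000000 in
/-- Let `H`, `K` be separable real Hilbert spaces and `HK` their Hilbert tensor product,
given by a bilinear map `t` whose elementary tensors satisfy
`⟨t h k, t h' k'⟩ = ⟨h, h'⟩⟨k, k'⟩` and span a dense subspace. Let `A`, `B` be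
self-adjoint nonnegative (densely defined) operators in `H`, `K` respectively, and let
`C` be the operator `A ⊗ 1 + 1 ⊗ B` defined on the algebraic tensor product
`Dom A ⊗_alg Dom B`; `C` is closable. Then the kernel of the closure `A ⊞ B = C̄` equals
the closed tensor product `(Ker A) ⊗ (Ker B)`, i.e. the closure of the span of the
elementary tensors of kernel vectors. -/
theorem stmt_0 {H K HK : Type*}
    [NormedAddCommGroup H] [InnerProductSpace ℝ H] [CompleteSpace H]
    [TopologicalSpace.SeparableSpace H]
    [NormedAddCommGroup K] [InnerProductSpace ℝ K] [CompleteSpace K]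
    [TopologicalSpace.SeparableSpace K]
    [NormedAddCommGroup HK] [InnerProductSpace ℝ HK] [CompleteSpace HK]
    (t : H →ₗ[ℝ] K →ₗ[ℝ] HK)
    (ht : ∀ (h h' : H) (k k' : K), ⟪t h k, t h' k'⟫ = ⟪h, h'⟫ * ⟪k, k'⟫)
    (htdense : Dense ((Submodule.span ℝ {z : HK | ∃ h k, z = t h k} : Submodule ℝ HK) : Set HK))
    (A : H →ₗ.[ℝ] H) (B : K →ₗ.[ℝ] K)
    (hAdense : Dense (A.domain : Set H)) (hBdense : Dense (B.domain : Set K))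
    (hAsa : A.adjoint = A) (hBsa : B.adjoint = B)
    (hAnn : ∀ x : A.domain, 0 ≤ ⟪A x, (x : H)⟫)
    (hBnn : ∀ y : B.domain, 0 ≤ ⟪B y, (y : K)⟫)
    (C : HK →ₗ.[ℝ] HK)
    (hCdom : C.domain
      = Submodule.span ℝ {z : HK | ∃ (x : A.domain) (y : B.domain), z = t ↑x ↑y})
    (hCapp : ∀ (x : A.domain) (y : B.domain) (hz : t ↑x ↑y ∈ C.domain),
      C ⟨t ↑x ↑y, hz⟩ = t (A x) ↑y + t ↑x (B y))
    (hCc : C.IsClosable) :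
    {z : HK | ∃ hz : z ∈ C.closure.domain, C.closure ⟨z, hz⟩ = 0}
      = (((Submodule.span ℝ {z : HK | ∃ (x : A.domain) (y : B.domain),
            A x = 0 ∧ B y = 0 ∧ z = t ↑x ↑y}).topologicalClosure : Submodule ℝ HK) : Set HK) := by
  classical
  have hsymA := symm_of_selfAdjoint hAdense hAsa
  have hsymB := symm_of_selfAdjoint hBdense hBsa
  -- the graph of C is spanned by the obvious generators
  set G₀ : Submodule ℝ (HK × HK) := Submodule.span ℝ
    {p : HK × HK | ∃ (x : A.domain) (y : B.domain),
      p = (t ↑x ↑y, t (A x) ↑y + t ↑x (B y))} with hG₀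
  have hG₀le : G₀ ≤ C.graph := by
    rw [hG₀, Submodule.span_le]
    rintro _ ⟨x, y, rfl⟩
    have hz : t ↑x ↑y ∈ C.domain := by
      rw [hCdom]; exact Submodule.subset_span ⟨x, y, rfl⟩
    exact C.mem_graph_iff.mpr ⟨⟨t ↑x ↑y, hz⟩, rfl, hCapp x y hz⟩
  have hgraph : C.graph = G₀ := by
    refine le_antisymm ?_ hG₀le
    intro p hp
    obtain ⟨w, hw1, hw2⟩ := C.mem_graph_iff.mp hp
    have hwd : (w : HK) ∈ Submodule.map (LinearMap.fst ℝ HK HK) G₀ := by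
      rw [hG₀, Submodule.map_span]
      have himg : (LinearMap.fst ℝ HK HK) ''
          {p : HK × HK | ∃ (x : A.domain) (y : B.domain),
            p = (t ↑x ↑y, t (A x) ↑y + t ↑x (B y))}
          = {z : HK | ∃ (x : A.domain) (y : B.domain), z = t ↑x ↑y} := by
        ext w'
        constructor
        · rintro ⟨_, ⟨x, y, rfl⟩, rfl⟩; exact ⟨x, y, rfl⟩
        · rintro ⟨x, y, rfl⟩
          exact ⟨(t ↑x ↑y, t (A x) ↑y + t ↑x (B y)), ⟨x, y, rfl⟩, rfl⟩
      rw [himg, ← hCdom]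
      exact w.2
    obtain ⟨q, hqG, hq1⟩ := hwd
    have hq1' : q.1 = (w : HK) := hq1
    have hqC : q ∈ C.graph := hG₀le hqG
    have hq2 : p.2 = q.2 := by
      have hpm : (p.1, p.2) ∈ C.graph := by simpa using hp
      have hqm : (q.1, q.2) ∈ C.graph := by simpa using hqC
      exact (C.mem_graph_snd_inj hqm hpm (by rw [hq1', hw1])).symm
    have hpq : p = q := by
      apply Prod.ext
      · rw [← hw1, ← hq1']
      · exact hq2
    rw [hpq]
    exact hqG
  -- symmetry of C on its graph
  have hsymC : ∀ p ∈ G₀, ∀ q ∈ G₀, ⟪p.2, q.1⟫ = ⟪p.1, q.2⟫ := by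
    intro p hp
    refine Submodule.span_induction ?_ ?_ ?_ ?_ hp
    · rintro _ ⟨x, y, rfl⟩ q hq
      refine Submodule.span_induction ?_ ?_ ?_ ?_ hq
      · rintro _ ⟨x', y', rfl⟩
        show ⟪t (A x) ↑y + t ↑x (B y), t ↑x' ↑y'⟫
          = ⟪t ↑x ↑y, t (A x') ↑y' + t ↑x' (B y')⟫
        rw [inner_add_left, inner_add_right, ht, ht, ht, ht,
          hsymA x x', hsymB y y']
      · simp
      · intro a b _ _ ha hb
        show ⟪_, (a + b).1⟫ = ⟪_, (a + b).2⟫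
        rw [Prod.fst_add, Prod.snd_add, inner_add_right, inner_add_right, ha, hb]
      · intro r a _ ha
        show ⟪_, (r • a).1⟫ = ⟪_, (r • a).2⟫
        rw [Prod.smul_fst, Prod.smul_snd, real_inner_smul_right, real_inner_smul_right, ha]
    · intro q hq; simp
    · intro a b _ _ ha hb q hq
      show ⟪(a + b).2, q.1⟫ = ⟪(a + b).1, q.2⟫
      rw [Prod.fst_add, Prod.snd_add, inner_add_left, inner_add_left, ha q hq, hb q hq]
    · intro r a _ ha q hq
      show ⟪(r • a).2, q.1⟫ = ⟪(r • a).1, q.2⟫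
      rw [Prod.smul_fst, Prod.smul_snd, real_inner_smul_left, real_inner_smul_left, ha q hq]
  -- the target kernel set as a submodule
  set SKer : Set HK := {z : HK | ∃ (x : A.domain) (y : B.domain),
      A x = 0 ∧ B y = 0 ∧ z = t ↑x ↑y} with hSKer
  ext z
  simp only [Set.mem_setOf_eq, SetLike.mem_coe]
  constructor
  · -- hard direction
    rintro ⟨hzdom, hzval⟩
    -- z is orthogonal to the range of C
    have hzg : (z, 0) ∈ C.closure.graph :=
      C.closure.mem_graph_iff.mpr ⟨⟨z, hzdom⟩, rfl, hzval⟩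
    rw [← hCc.graph_closure_eq_closure_graph] at hzg
    have hzg' : (z, (0:HK)) ∈ closure (C.graph : Set (HK × HK)) := by
      rwa [← Submodule.topologicalClosure_coe, SetLike.mem_coe]
    obtain ⟨ps, hps, hlim⟩ := mem_closure_iff_seq_limit.mp hzg'
    have hlim1 : Filter.Tendsto (fun n => (ps n).1) Filter.atTop (nhds z) :=
      (continuous_fst.tendsto _).comp hlim
    have hlim2 : Filter.Tendsto (fun n => (ps n).2) Filter.atTop (nhds 0) :=
      (continuous_snd.tendsto _).comp hlim
    have zperp : ∀ (x : A.domain) (y : B.domain),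
        ⟪z, t (A x) ↑y + t ↑x (B y)⟫ = 0 := by
      intro x y
      have hqG : ((t ↑x ↑y, t (A x) ↑y + t ↑x (B y)) : HK × HK) ∈ G₀ :=
        Submodule.subset_span ⟨x, y, rfl⟩
      have hseq : ∀ n, ⟪(ps n).2, t ↑x ↑y⟫ = ⟪(ps n).1, t (A x) ↑y + t ↑x (B y)⟫ := by
        intro n
        have hpn : ps n ∈ G₀ := by rw [← hgraph]; exact hps n
        exact hsymC (ps n) hpn _ hqG
      have t1 : Filter.Tendsto (fun n => ⟪(ps n).2, t ↑x ↑y⟫) Filter.atTop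
          (nhds ⟪(0:HK), t ↑x ↑y⟫) := hlim2.inner tendsto_const_nhds
      have t2 : Filter.Tendsto (fun n => ⟪(ps n).1, t (A x) ↑y + t ↑x (B y)⟫) Filter.atTop
          (nhds ⟪z, t (A x) ↑y + t ↑x (B y)⟫) := hlim1.inner tendsto_const_nhds
      rw [show (fun n => ⟪(ps n).2, t ↑x ↑y⟫)
          = fun n => ⟪(ps n).1, t (A x) ↑y + t ↑x (B y)⟫ from funext hseq] at t1
      have := tendsto_nhds_unique t1 t2
      rw [inner_zero_left] at this
      exact this.symm
    -- resolvents
    obtain ⟨R, hRg, hRsym, hRpos, hRpos', hRinj, hRfix⟩ :=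
      resolvent_exists A hAdense hAsa hAnn
    obtain ⟨S, hSg, hSsym, hSpos, hSpos', hSinj, hSfix⟩ :=
      resolvent_exists B hBdense hBsa hBnn
    have hRsym' : ∀ x y, ⟪((1:H →L[ℝ] H) - R) x, y⟫ = ⟪x, ((1:H →L[ℝ] H) - R) y⟫ := by
      intro x y
      simp only [ContinuousLinearMap.sub_apply, ContinuousLinearMap.one_apply,
        inner_sub_left, inner_sub_right]
      rw [hRsym x y]
    have hSsym' : ∀ x y, ⟪((1:K →L[ℝ] K) - S) x, y⟫ = ⟪x, ((1:K →L[ℝ] K) - S) y⟫ := by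
      intro x y
      simp only [ContinuousLinearMap.sub_apply, ContinuousLinearMap.one_apply,
        inner_sub_left, inner_sub_right]
      rw [hSsym x y]
    have hRpos'' : ∀ x, 0 ≤ ⟪((1:H →L[ℝ] H) - R) x, x⟫ := by
      intro x
      simpa using hRpos' x
    have hSpos'' : ∀ x, 0 ≤ ⟪((1:K →L[ℝ] K) - S) x, x⟫ := by
      intro x
      simpa using hSpos' x
    set D₁ := tensorCLM t ht htdense ((1:H →L[ℝ] H) - R) S with hD₁
    set D₂ := tensorCLM t ht htdense R ((1:K →L[ℝ] K) - S) with hD₂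
    -- ⟪z, D₁ (t x y) + D₂ (t x y)⟫ = 0
    have hzD : ∀ (x : H) (y : K), ⟪z, D₁ (t x y) + D₂ (t x y)⟫ = 0 := by
      intro x y
      obtain ⟨u, hu1, hu2⟩ := A.mem_graph_iff.mp (hRg x)
      obtain ⟨v, hv1, hv2⟩ := B.mem_graph_iff.mp (hSg y)
      simp only at hu1 hu2 hv1 hv2
      have e1 : D₁ (t x y) = t (x - R x) (S y) := by
        rw [hD₁, tensorCLM_apply]
        simp
      have e2 : D₂ (t x y) = t (R x) (y - S y) := by
        rw [hD₂, tensorCLM_apply]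
        simp
      have := zperp u v
      rw [hu1, hu2, hv1, hv2] at this
      rw [e1, e2]
      exact this
    -- D₁ z = 0 and D₂ z = 0
    have hDz : D₁ z + D₂ z = 0 := by
      apply eq_zero_of_inner_elem t htdense
      intro h k
      have h1 : ⟪D₁ z + D₂ z, t h k⟫ = ⟪z, D₁ (t h k) + D₂ (t h k)⟫ := by
        rw [inner_add_left, inner_add_right]
        rw [hD₁, hD₂, tensorCLM_symm t ht htdense _ _ hRsym' hSsym z (t h k),
          tensorCLM_symm t ht htdense _ _ hRsym hSsym' z (t h k)]
      rw [h1, hzD h k]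
    have hD1pos := tensorCLM_pos t ht htdense _ _ hRsym' hSsym hRpos'' hSpos
    have hD2pos := tensorCLM_pos t ht htdense _ _ hRsym hSsym' hRpos hSpos''
    have hD1z : D₁ z = 0 := by
      apply pos_form_eq_zero D₁ (tensorCLM_symm t ht htdense _ _ hRsym' hSsym) hD1pos
      have h2 : ⟪D₁ z, z⟫ + ⟪D₂ z, z⟫ = 0 := by
        rw [← inner_add_left, hDz, inner_zero_left]
      have := hD1pos z
      have := hD2pos z
      linarith
    have hD2z : D₂ z = 0 := by
      apply pos_form_eq_zero D₂ (tensorCLM_symm t ht htdense _ _ hRsym hSsym') hD2pos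
      have h2 : ⟪D₁ z, z⟫ + ⟪D₂ z, z⟫ = 0 := by
        rw [← inner_add_left, hDz, inner_zero_left]
      have := hD1pos z
      have := hD2pos z
      linarith
    -- slice maps
    have hnorm_tk : ∀ (h : H) (k : K), ‖t h k‖ = ‖h‖ * ‖k‖ := by
      intro h k
      have h1 : ‖t h k‖^2 = (‖h‖ * ‖k‖)^2 := by
        rw [← real_inner_self_eq_norm_sq, ht]
        rw [real_inner_self_eq_norm_sq, real_inner_self_eq_norm_sq]
        ring
      nlinarith [norm_nonneg (t h k), norm_nonneg h, norm_nonneg k,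
        mul_nonneg (norm_nonneg h) (norm_nonneg k)]
    set φ : K → (H →L[ℝ] HK) := fun k => LinearMap.mkContinuous (t.flip k) ‖k‖
      (fun h => by rw [show t.flip k h = t h k from rfl, hnorm_tk, mul_comm]) with hφ
    set ψ : H → (K →L[ℝ] HK) := fun h => LinearMap.mkContinuous (t h) ‖h‖
      (fun k => by rw [hnorm_tk]) with hψ
    set a : K → H := fun k => ContinuousLinearMap.adjoint (φ k) z with haf
    set b : H → K := fun h => ContinuousLinearMap.adjoint (ψ h) z with hbf
    have hak : ∀ (k : K) (h : H), ⟪a k, h⟫ = ⟪z, t h k⟫ := fun k h =>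
      ContinuousLinearMap.adjoint_inner_left (φ k) h z
    have hbk : ∀ (h : H) (k : K), ⟪b h, k⟫ = ⟪z, t h k⟫ := fun h k =>
      ContinuousLinearMap.adjoint_inner_left (ψ h) k z
    -- all H-slices lie in Ker A
    have hkerA : ∀ k : K, (a k, 0) ∈ A.graph := by
      intro k
      have step1 : a k = a (S k) := by
        have hz2 : ∀ h : H, ⟪R (a k - a (S k)), h⟫ = 0 := by
          intro h
          have h0 : ⟪D₂ z, t h k⟫ = 0 := by rw [hD2z, inner_zero_left]
          rw [tensorCLM_symm_elem t ht htdense _ _ hRsym hSsym' z h k] at h0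
          have e1 : t (R h) (((1:K →L[ℝ] K) - S) k) = t (R h) k - t (R h) (S k) := by
            simp only [ContinuousLinearMap.sub_apply, ContinuousLinearMap.one_apply]
            rw [map_sub]
          rw [e1, inner_sub_right] at h0
          have e2 : ⟪z, t (R h) k⟫ = ⟪a k, R h⟫ := (hak k (R h)).symm
          have e3 : ⟪z, t (R h) (S k)⟫ = ⟪a (S k), R h⟫ := (hak (S k) (R h)).symm
          rw [e2, e3] at h0
          have e4 : ⟪R (a k - a (S k)), h⟫ = ⟪a k - a (S k), R h⟫ := hRsym _ h
          rw [e4, inner_sub_left]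
          linarith
        have hz3 : R (a k - a (S k)) = 0 := by
          have := hz2 (R (a k - a (S k)))
          exact inner_self_eq_zero.mp this
        have := hRinj _ hz3
        exact sub_eq_zero.mp this
      have step2 : R (a (S k)) = a (S k) := by
        have hz2 : ∀ h : H, ⟪a (S k) - R (a (S k)), h⟫ = 0 := by
          intro h
          have h0 : ⟪D₁ z, t h k⟫ = 0 := by rw [hD1z, inner_zero_left]
          rw [tensorCLM_symm_elem t ht htdense _ _ hRsym' hSsym z h k] at h0
          have e1 : t (((1:H →L[ℝ] H) - R) h) (S k) = t h (S k) - t (R h) (S k) := by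
            simp only [ContinuousLinearMap.sub_apply, ContinuousLinearMap.one_apply]
            rw [map_sub, LinearMap.sub_apply]
          rw [e1, inner_sub_right] at h0
          have e2 : ⟪z, t h (S k)⟫ = ⟪a (S k), h⟫ := (hak (S k) h).symm
          have e3 : ⟪z, t (R h) (S k)⟫ = ⟪a (S k), R h⟫ := (hak (S k) (R h)).symm
          rw [e2, e3] at h0
          have e4 : ⟪a (S k), R h⟫ = ⟪R (a (S k)), h⟫ := (hRsym _ h).symm
          rw [e4] at h0
          rw [inner_sub_left]
          linarith
        have hz3 : a (S k) - R (a (S k)) = 0 := by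
          have := hz2 (a (S k) - R (a (S k)))
          exact inner_self_eq_zero.mp this
        have : R (a (S k)) - a (S k) = 0 := by
          rw [← neg_sub]
          rw [hz3, neg_zero]
        rw [← sub_eq_zero]
        exact this
      rw [step1]
      exact (hRfix _).mp step2
    -- all K-slices lie in Ker B
    have hkerB : ∀ h : H, (b h, 0) ∈ B.graph := by
      intro h
      have step1 : b h = b (R h) := by
        have hz2 : ∀ k : K, ⟪S (b h - b (R h)), k⟫ = 0 := by
          intro k
          have h0 : ⟪D₁ z, t h k⟫ = 0 := by rw [hD1z, inner_zero_left]
          rw [tensorCLM_symm_elem t ht htdense _ _ hRsym' hSsym z h k] at h0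
          have e1 : t (((1:H →L[ℝ] H) - R) h) (S k) = t h (S k) - t (R h) (S k) := by
            simp only [ContinuousLinearMap.sub_apply, ContinuousLinearMap.one_apply]
            rw [map_sub, LinearMap.sub_apply]
          rw [e1, inner_sub_right] at h0
          have e2 : ⟪z, t h (S k)⟫ = ⟪b h, S k⟫ := (hbk h (S k)).symm
          have e3 : ⟪z, t (R h) (S k)⟫ = ⟪b (R h), S k⟫ := (hbk (R h) (S k)).symm
          rw [e2, e3] at h0
          have e4 : ⟪S (b h - b (R h)), k⟫ = ⟪b h - b (R h), S k⟫ := hSsym _ k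
          rw [e4, inner_sub_left]
          linarith
        have hz3 : S (b h - b (R h)) = 0 := by
          have := hz2 (S (b h - b (R h)))
          exact inner_self_eq_zero.mp this
        have := hSinj _ hz3
        exact sub_eq_zero.mp this
      have step2 : S (b (R h)) = b (R h) := by
        have hz2 : ∀ k : K, ⟪b (R h) - S (b (R h)), k⟫ = 0 := by
          intro k
          have h0 : ⟪D₂ z, t h k⟫ = 0 := by rw [hD2z, inner_zero_left]
          rw [tensorCLM_symm_elem t ht htdense _ _ hRsym hSsym' z h k] at h0
          have e1 : t (R h) (((1:K →L[ℝ] K) - S) k) = t (R h) k - t (R h) (S k) := by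
            simp only [ContinuousLinearMap.sub_apply, ContinuousLinearMap.one_apply]
            rw [map_sub]
          rw [e1, inner_sub_right] at h0
          have e2 : ⟪z, t (R h) k⟫ = ⟪b (R h), k⟫ := (hbk (R h) k).symm
          have e3 : ⟪z, t (R h) (S k)⟫ = ⟪b (R h), S k⟫ := (hbk (R h) (S k)).symm
          rw [e2, e3] at h0
          have e4 : ⟪b (R h), S k⟫ = ⟪S (b (R h)), k⟫ := (hSsym _ k).symm
          rw [e4] at h0
          rw [inner_sub_left]
          linarith
        have hz3 : b (R h) - S (b (R h)) = 0 := by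
          have := hz2 (b (R h) - S (b (R h)))
          exact inner_self_eq_zero.mp this
        have : S (b (R h)) - b (R h) = 0 := by
          rw [← neg_sub, hz3, neg_zero]
        rw [← sub_eq_zero]
        exact this
      rw [step1]
      exact (hSfix _).mp step2
    -- orthogonal projections onto the kernels
    set UA : Submodule ℝ H := LinearMap.ker (((1:H →L[ℝ] H) - R) : H →ₗ[ℝ] H) with hUA
    set UB : Submodule ℝ K := LinearMap.ker (((1:K →L[ℝ] K) - S) : K →ₗ[ℝ] K) with hUB
    have hUAmem : ∀ x : H, x ∈ UA ↔ (x, 0) ∈ A.graph := by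
      intro x
      rw [hUA, LinearMap.mem_ker]
      constructor
      · intro hx
        have : R x = x := by
          have h1 : x - R x = 0 := by
            simpa using hx
          have := sub_eq_zero.mp h1
          exact this.symm
        exact (hRfix x).mp this
      · intro hx
        have := (hRfix x).mpr hx
        show x - R x = 0
        rw [this, sub_self]
    have hUBmem : ∀ y : K, y ∈ UB ↔ (y, 0) ∈ B.graph := by
      intro y
      rw [hUB, LinearMap.mem_ker]
      constructor
      · intro hy
        have : S y = y := by
          have h1 : y - S y = 0 := by simpa using hy
          exact (sub_eq_zero.mp h1).symm
        exact (hSfix y).mp this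
      · intro hy
        have := (hSfix y).mpr hy
        show y - S y = 0
        rw [this, sub_self]
    haveI : CompleteSpace UA :=
      (ContinuousLinearMap.isClosed_ker ((1:H →L[ℝ] H) - R)).completeSpace_coe
    haveI : CompleteSpace UB :=
      (ContinuousLinearMap.isClosed_ker ((1:K →L[ℝ] K) - S)).completeSpace_coe
    set P1 : H →L[ℝ] H := UA.subtypeL.comp (UA.orthogonalProjectionOnto) with hP1
    set P2 : K →L[ℝ] K := UB.subtypeL.comp (UB.orthogonalProjectionOnto) with hP2
    have hP1app : ∀ x : H, P1 x = ↑(UA.orthogonalProjectionOnto x) := fun x => rfl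
    have hP2app : ∀ y : K, P2 y = ↑(UB.orthogonalProjectionOnto y) := fun y => rfl
    have hP1sym : ∀ x y : H, ⟪P1 x, y⟫ = ⟪x, P1 y⟫ := fun x y =>
      Submodule.inner_starProjection_left_eq_right UA x y
    have hP2sym : ∀ x y : K, ⟪P2 x, y⟫ = ⟪x, P2 y⟫ := fun x y =>
      Submodule.inner_starProjection_left_eq_right UB x y
    -- the key identity: ⟪z, t h k⟫ = ⟪z, t (P1 h) (P2 k)⟫
    have hzE : ∀ (h : H) (k : K), ⟪z, t h k⟫ = ⟪z, t (P1 h) (P2 k)⟫ := by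
      intro h k
      have c1 : ⟪z, t h k⟫ = ⟪a k, h⟫ := (hak k h).symm
      have c2 : ⟪a k, h⟫ = ⟪a k, P1 h⟫ := by
        have horth : h - P1 h ∈ UAᗮ := Submodule.sub_starProjection_mem_orthogonal (K := UA) h
        have haU : a k ∈ UA := (hUAmem (a k)).mpr (hkerA k)
        have := (Submodule.mem_orthogonal UA (h - P1 h)).mp horth (a k) haU
        rw [inner_sub_right] at this
        linarith
      have c3 : ⟪a k, P1 h⟫ = ⟪z, t (P1 h) k⟫ := hak k (P1 h)
      have c4 : ⟪z, t (P1 h) k⟫ = ⟪b (P1 h), k⟫ := (hbk (P1 h) k).symm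
      have c5 : ⟪b (P1 h), k⟫ = ⟪b (P1 h), P2 k⟫ := by
        have horth : k - P2 k ∈ UBᗮ := Submodule.sub_starProjection_mem_orthogonal (K := UB) k
        have hbU : b (P1 h) ∈ UB := (hUBmem (b (P1 h))).mpr (hkerB (P1 h))
        have := (Submodule.mem_orthogonal UB (k - P2 k)).mp horth (b (P1 h)) hbU
        rw [inner_sub_right] at this
        linarith
      have c6 : ⟪b (P1 h), P2 k⟫ = ⟪z, t (P1 h) (P2 k)⟫ := hbk (P1 h) (P2 k)
      rw [c1, c2, c3, c4, c5, c6]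
    -- hence z is fixed by P1 ⊗ P2
    set E := tensorCLM t ht htdense P1 P2 with hE
    have hzfix : z = E z := by
      have hdiff : z - E z = 0 := by
        apply eq_zero_of_inner_elem t htdense
        intro h k
        rw [inner_sub_left]
        have h1 : ⟪E z, t h k⟫ = ⟪z, t (P1 h) (P2 k)⟫ :=
          tensorCLM_symm_elem t ht htdense P1 P2 hP1sym hP2sym z h k
        rw [h1, ← hzE h k, sub_self]
      have := sub_eq_zero.mp hdiff
      exact this
    -- and the range of P1 ⊗ P2 lies in the closure of the kernel span
    have hmaps : ∀ w ∈ Submodule.span ℝ {z : HK | ∃ h k, z = t h k},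
        E w ∈ Submodule.span ℝ SKer := by
      intro w hw
      refine Submodule.span_induction ?_ ?_ ?_ ?_ hw
      · rintro _ ⟨h, k, rfl⟩
        rw [hE, tensorCLM_apply t ht htdense P1 P2 h k]
        have hmem1 : P1 h ∈ UA := by rw [hP1app]; exact SetLike.coe_mem _
        have hmem2 : P2 k ∈ UB := by rw [hP2app]; exact SetLike.coe_mem _
        obtain ⟨u, hu1, hu2⟩ := A.mem_graph_iff.mp ((hUAmem (P1 h)).mp hmem1)
        obtain ⟨v, hv1, hv2⟩ := B.mem_graph_iff.mp ((hUBmem (P2 k)).mp hmem2)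
        simp only at hu1 hu2 hv1 hv2
        apply Submodule.subset_span
        exact ⟨u, v, hu2, hv2, by rw [hu1, hv1]⟩
      · rw [map_zero]; exact Submodule.zero_mem _
      · intro x y _ _ hx hy
        rw [map_add]; exact Submodule.add_mem _ hx hy
      · intro r x _ hx
        rw [map_smul]; exact Submodule.smul_mem _ r hx
    -- conclude
    have hz_cl : z ∈ closure ((Submodule.span ℝ {z : HK | ∃ h k, z = t h k}
        : Submodule ℝ HK) : Set HK) := by
      rw [htdense.closure_eq]; trivial
    have hEz_cl : E z ∈ closure ((Submodule.span ℝ SKer : Submodule ℝ HK) : Set HK) := by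
      have h1 : E z ∈ E '' closure ((Submodule.span ℝ {z : HK | ∃ h k, z = t h k}
          : Submodule ℝ HK) : Set HK) := Set.mem_image_of_mem E hz_cl
      have h2 := image_closure_subset_closure_image (f := E)
        (s := ((Submodule.span ℝ {z : HK | ∃ h k, z = t h k} : Submodule ℝ HK) : Set HK))
        E.continuous
      have h3 := h2 h1
      refine closure_mono ?_ h3
      rintro _ ⟨w, hw, rfl⟩
      exact hmaps w hw
    rw [← Submodule.topologicalClosure_coe, SetLike.mem_coe] at hEz_cl
    rw [hzfix]
    exact hEz_cl
  · -- easy direction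
    intro hzmem
    set N : Submodule ℝ HK :=
      Submodule.comap ((LinearMap.id : HK →ₗ[ℝ] HK).prod 0) C.closure.graph with hN
    have hNmem : ∀ w : HK, w ∈ N ↔ (w, 0) ∈ C.closure.graph := by
      intro w
      rw [hN, Submodule.mem_comap]
      constructor
      · intro hw; exact hw
      · intro hw; exact hw
    have hNclosed : IsClosed (N : Set HK) := by
      have hgraphclosed : IsClosed ((C.closure.graph : Submodule ℝ (HK × HK)) : Set (HK × HK)) := by
        rw [← hCc.graph_closure_eq_closure_graph]
        exact Submodule.isClosed_topologicalClosure _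
      have : (N : Set HK) = (fun w : HK => (w, (0:HK))) ⁻¹' (C.closure.graph : Set (HK × HK)) := by
        ext w
        simp only [Set.mem_preimage, SetLike.mem_coe]
        exact hNmem w
      rw [this]
      exact hgraphclosed.preimage (continuous_id.prodMk continuous_const)
    have hspan : Submodule.span ℝ SKer ≤ N := by
      rw [Submodule.span_le]
      rintro _ ⟨x, y, hx0, hy0, rfl⟩
      rw [SetLike.mem_coe, hNmem]
      have hgen : ((t ↑x ↑y, t (A x) ↑y + t ↑x (B y)) : HK × HK) ∈ G₀ :=
        Submodule.subset_span ⟨x, y, rfl⟩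
      have hval : t (A x) ↑y + t ↑x (B y) = 0 := by
        rw [hx0, hy0, map_zero, LinearMap.zero_apply, map_zero, add_zero]
      rw [hval] at hgen
      have h1 : ((t ↑x ↑y, (0:HK)) : HK × HK) ∈ C.graph := hG₀le hgen
      have h2 : C.graph ≤ C.closure.graph := by
        rw [← hCc.graph_closure_eq_closure_graph]
        exact Submodule.le_topologicalClosure _
      exact h2 h1
    have hle := Submodule.topologicalClosure_minimal (Submodule.span ℝ SKer) hspan hNclosed
    have hzN : z ∈ N := hle hzmem
    rw [hNmem] at hzN
    obtain ⟨u, hu1, hu2⟩ := C.closure.mem_graph_iff.mp hzN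
    simp only at hu1 hu2
    refine ⟨hu1 ▸ u.2, ?_⟩
    have : (⟨z, hu1 ▸ u.2⟩ : C.closure.domain) = u := by
      exact Subtype.ext hu1.symm
    rw [this, hu2]
end

section
/- Fix orthonormal vectors and degrees as follows: let H_j be Hilbert spaces with degree p(j), and e^{(j)}_{k} orthonormal in H_j. For r₁,…,r_l ∈ ℕ with r₁+…+r_l = m, and strictly increasing index sequences when p(j) is odd (non-decreasing when p(j) is even), the graded symmetrization P satisfies ‖P(e^{(1)}_{k₁^{(1)}}⊗…⊗e^{(l)}_{k_{r_l}^{(l)}})‖² = (r₁!⋯r_l!/m!) ∏_{j=1}^l ‖e^{(j)}_{k₁^{(j)}} ⋄ ⋯ ⋄ e^{(j)}_{k_{r_j}^{(j)}}‖², where ⋄ is the wedge product if p(j) is odd and the symmetric product if p(j) is even. -/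
open scoped RealInnerProductSpace

/-- The graded sign `sign(σ; i₁,…,i_m) = ∏_{k<r, σ(k)>σ(r)} (-1)^{p(i_{σ(k)}) p(i_{σ(r)})}`. -/
def gsign {ι : Type*} (p : ι → ℕ) {m : ℕ} (i : Fin m → ι) (σ : Equiv.Perm (Fin m)) : ℤ :=
  ∏ x ∈ Finset.univ.filter (fun x : Fin m × Fin m => x.1 < x.2 ∧ σ x.2 < σ x.1),
    (-1 : ℤ) ^ (p (i (σ x.1)) * p (i (σ x.2)))

namespace Stmt16Aux

lemma perm_apply_inv_self {α : Type*} (f : Equiv.Perm α) (x : α) : f (f⁻¹ x) = x :=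
  f.apply_symm_apply x

lemma perm_inv_apply_self {α : Type*} (f : Equiv.Perm α) (x : α) : f⁻¹ (f x) = x :=
  f.symm_apply_apply x

/-- pairs `(a,b)` with `a < b` and `π b < π a` -/
def invPairs (n : ℕ) (π : Equiv.Perm (Fin n)) : Finset (Fin n × Fin n) :=
  Finset.univ.filter (fun x : Fin n × Fin n => x.1 < x.2 ∧ π x.2 < π x.1)

/-- graded sign attached to inversions of `π`, degrees `d` -/
def gprod {n : ℕ} (d : Fin n → ℕ) (π : Equiv.Perm (Fin n)) : ℤ :=
  ∏ x ∈ invPairs n π, (-1 : ℤ) ^ (d x.1 * d x.2)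

lemma gprod_mul_self {n : ℕ} (d : Fin n → ℕ) (π : Equiv.Perm (Fin n)) :
    gprod d π * gprod d π = 1 := by
  rw [gprod, ← Finset.prod_mul_distrib]
  refine Finset.prod_eq_one fun x _ => ?_
  rw [← pow_add]
  exact Even.neg_one_pow ⟨_, rfl⟩

lemma gsign_eq_gprod {ι : Type*} (p : ι → ℕ) {m : ℕ} (i : Fin m → ι)
    (σ : Equiv.Perm (Fin m)) : gsign p i σ = gprod (fun k => p (i k)) σ⁻¹ := by
  rw [gsign, gprod, invPairs]
  refine Finset.prod_nbij' (fun x => (σ x.2, σ x.1)) (fun y => (σ⁻¹ y.2, σ⁻¹ y.1)) ?_ ?_ ?_ ?_ ?_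
  · intro x hx
    simp only [Finset.mem_filter, Finset.mem_univ, true_and] at hx ⊢
    simpa using hx.symm
  · intro y hy
    simp only [Finset.mem_filter, Finset.mem_univ, true_and] at hy ⊢
    simpa using hy.symm
  · intro x _; simp
  · intro y _; simp
  · intro x _; simp [mul_comm]

end Stmt16Aux

namespace Stmt16Aux

open Finset Equiv

lemma invPairs_eq_filter {n : ℕ} (π : Equiv.Perm (Fin n)) :
    invPairs n π = (Finset.univ.filter (fun x : Fin n × Fin n => x.1 < x.2)).filter
      (fun x => π x.2 < π x.1) := by
  rw [invPairs, Finset.filter_filter]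

lemma gprod_eq_prod_ite {n : ℕ} (d : Fin n → ℕ) (π : Equiv.Perm (Fin n)) :
    gprod d π = ∏ x ∈ Finset.univ.filter (fun x : Fin n × Fin n => x.1 < x.2),
      (if π x.2 < π x.1 then (-1 : ℤ) ^ (d x.1 * d x.2) else 1) := by
  rw [gprod, invPairs_eq_filter, Finset.prod_filter]

lemma gprod_mul {n : ℕ} (d : Fin n → ℕ) (π κ : Equiv.Perm (Fin n))
    (hκ : ∀ k, d (κ k) = d k) :
    gprod d (π * κ) = gprod d π * gprod d κ := by
  have hκ' : ∀ z, d (κ⁻¹ z) = d z := fun z => by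
    conv_rhs => rw [← Stmt16Aux.perm_apply_inv_self κ z, hκ]
  have key : gprod d π = ∏ x ∈ Finset.univ.filter (fun x : Fin n × Fin n => x.1 < x.2),
      (if (if κ x.1 < κ x.2 then π (κ x.2) < π (κ x.1) else π (κ x.1) < π (κ x.2))
        then (-1 : ℤ) ^ (d x.1 * d x.2) else 1) := by
    rw [gprod_eq_prod_ite]
    refine Finset.prod_nbij'
      (fun y => if κ⁻¹ y.1 < κ⁻¹ y.2 then (κ⁻¹ y.1, κ⁻¹ y.2) else (κ⁻¹ y.2, κ⁻¹ y.1))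
      (fun x => if κ x.1 < κ x.2 then (κ x.1, κ x.2) else (κ x.2, κ x.1)) ?_ ?_ ?_ ?_ ?_
    · intro y hy
      simp only [Finset.mem_filter, Finset.mem_univ, true_and] at hy ⊢
      split
      · assumption
      · rcases lt_or_gt_of_ne (fun h : κ⁻¹ y.1 = κ⁻¹ y.2 => absurd (by simpa using h) hy.ne)
          with h | h
        · exact absurd h ‹¬_›
        · exact h
    · intro x hx
      simp only [Finset.mem_filter, Finset.mem_univ, true_and] at hx ⊢
      split
      · assumption
      · rcases lt_or_gt_of_ne (fun h : κ x.1 = κ x.2 => absurd (κ.injective h) hx.ne)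
          with h | h
        · exact absurd h ‹¬_›
        · exact h
    · intro y hy
      simp only [Finset.mem_filter, Finset.mem_univ, true_and] at hy
      by_cases h : κ⁻¹ y.1 < κ⁻¹ y.2 <;> simp only [Equiv.Perm.coe_inv] at h <;> simp [h, hy, hy.le, hy.not_gt, not_lt_of_gt hy]
    · intro x hx
      simp only [Finset.mem_filter, Finset.mem_univ, true_and] at hx
      by_cases h : κ x.1 < κ x.2 <;> simp [h, hx, not_lt_of_gt, hx.not_gt]
    · intro y hy
      simp only [Finset.mem_filter, Finset.mem_univ, true_and] at hy
      by_cases h : κ⁻¹ y.1 < κ⁻¹ y.2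
      · simp only [h, if_true, Stmt16Aux.perm_apply_inv_self, hy, hκ']
      · have h' : κ⁻¹ y.2 < κ⁻¹ y.1 :=
          (lt_or_gt_of_ne (fun h0 : κ⁻¹ y.1 = κ⁻¹ y.2 =>
            absurd (by simpa using h0) hy.ne)).resolve_left h
        simp only [h, if_false, Stmt16Aux.perm_apply_inv_self, not_lt_of_gt hy, hκ']
        simp [mul_comm]
  rw [key, gprod_eq_prod_ite d κ, gprod_eq_prod_ite d (π * κ), ← Finset.prod_mul_distrib]
  refine Finset.prod_congr rfl fun x hx => ?_
  simp only [Finset.mem_filter, Finset.mem_univ, true_and] at hx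
  have hne : κ x.1 ≠ κ x.2 := fun h => absurd (κ.injective h) hx.ne
  have hne2 : π (κ x.1) ≠ π (κ x.2) := fun h => hne (π.injective h)
  simp only [Equiv.Perm.mul_apply]
  by_cases h1 : κ x.1 < κ x.2
  · simp [h1, not_lt_of_gt h1]
    exact if_congr Iff.rfl rfl rfl
  · have h1' : κ x.2 < κ x.1 := (lt_or_gt_of_ne hne).resolve_left h1
    by_cases h2 : π (κ x.2) < π (κ x.1)
    · simp [h1, h1', h2, not_lt_of_gt h2]
    · have h2' : π (κ x.1) < π (κ x.2) := (lt_or_gt_of_ne hne2.symm).resolve_left h2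
      simp only [h1, h1', h2, h2', if_true, if_false, not_false_iff]
      rw [← pow_add]
      exact (Even.neg_one_pow ⟨_, rfl⟩).symm

end Stmt16Aux

namespace Stmt16Aux

open Finset Equiv

lemma sign_eq_signAux {n : ℕ} (σ : Equiv.Perm (Fin n)) :
    Equiv.Perm.sign σ = Equiv.Perm.signAux σ := by
  refine Equiv.Perm.swap_induction_on σ (by simp [Equiv.Perm.signAux_one])
    (fun f x y hxy ih => ?_)
  rw [Equiv.Perm.sign_mul, Equiv.Perm.signAux_mul, Equiv.Perm.sign_swap hxy,
    Equiv.Perm.signAux_swap hxy, ih]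

lemma sign_eq_prod_invPairs {n : ℕ} (σ : Equiv.Perm (Fin n)) :
    ((Equiv.Perm.sign σ : ℤˣ) : ℤ) = ∏ x ∈ invPairs n σ, (-1 : ℤ) := by
  rw [sign_eq_signAux, Equiv.Perm.signAux]
  rw [show ((↑(∏ x ∈ Equiv.Perm.finPairsLT n,
      if σ x.1 ≤ σ x.2 then (-1 : ℤˣ) else 1) : ℤˣ) : ℤ)
    = ∏ x ∈ Equiv.Perm.finPairsLT n, ((if σ x.1 ≤ σ x.2 then (-1 : ℤˣ) else 1 : ℤˣ) : ℤ)
    from map_prod (Units.coeHom ℤ) _ _]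
  have : ∀ x : Σ _ : Fin n, Fin n, ((if σ x.1 ≤ σ x.2 then (-1 : ℤˣ) else 1 : ℤˣ) : ℤ)
      = if σ x.1 ≤ σ x.2 then (-1 : ℤ) else 1 := fun x => by split <;> simp
  rw [Finset.prod_congr rfl fun x _ => this x, Finset.prod_ite, Finset.prod_const,
    Finset.prod_const, one_pow, mul_one, invPairs]
  rw [Finset.prod_const]
  congr 1
  refine Finset.card_bij (fun x _ => (x.2, x.1)) ?_ ?_ ?_
  · rintro ⟨a, b⟩ hx
    simp only [Finset.mem_filter, Equiv.Perm.mem_finPairsLT] at hx ⊢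
    obtain ⟨h1, h2⟩ := hx
    exact ⟨Finset.mem_univ _, h1, lt_of_le_of_ne h2 (fun h => absurd (σ.injective h) h1.ne')⟩
  · rintro ⟨a, b⟩ h1 ⟨a', b'⟩ h2 h
    simp only [Prod.mk.injEq] at h
    ext <;> simp [h.1, h.2]
  · rintro ⟨a, b⟩ hx
    simp only [Finset.mem_filter, Finset.mem_univ, true_and] at hx
    refine ⟨⟨b, a⟩, ?_, rfl⟩
    simp only [Finset.mem_filter, Equiv.Perm.mem_finPairsLT]
    exact ⟨hx.1, hx.2.le⟩

end Stmt16Aux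

namespace Stmt16Aux

open Finset Equiv

section Blocks

variable {l : ℕ} (r : Fin l → ℕ) (E : (Σ j : Fin l, Fin (r j)) ≃ Fin (∑ j, r j))

/-- the block permutation on `Fin m` induced by a family of permutations of the blocks -/
def bperm (g : ∀ j, Equiv.Perm (Fin (r j))) : Equiv.Perm (Fin (∑ j, r j)) :=
  E.permCongr (Equiv.sigmaCongrRight g)

lemma bperm_apply (g : ∀ j, Equiv.Perm (Fin (r j))) (a : Σ j : Fin l, Fin (r j)) :
    bperm r E g (E a) = E ⟨a.1, g a.1 a.2⟩ := by
  simp only [bperm, Equiv.permCongr_apply, Equiv.symm_apply_apply]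
  rfl

lemma bperm_symm_apply (g : ∀ j, Equiv.Perm (Fin (r j))) (k : Fin (∑ j, r j)) :
    E.symm (bperm r E g k) = ⟨(E.symm k).1, g (E.symm k).1 (E.symm k).2⟩ := by
  conv_lhs => rw [← E.apply_symm_apply k]
  rw [bperm_apply, E.symm_apply_apply]

lemma bperm_bp (g : ∀ j, Equiv.Perm (Fin (r j))) (k : Fin (∑ j, r j)) :
    (E.symm (bperm r E g k)).1 = (E.symm k).1 := by
  rw [bperm_symm_apply]

lemma bperm_inv (g : ∀ j, Equiv.Perm (Fin (r j))) :
    (bperm r E g)⁻¹ = bperm r E (fun j => (g j)⁻¹) := by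
  refine inv_eq_of_mul_eq_one_left ?_
  ext k
  rw [Equiv.Perm.mul_apply]
  conv_lhs => rw [← E.apply_symm_apply k, bperm_apply, bperm_apply]
  simp

variable (hE : ∀ a b : Σ j : Fin l, Fin (r j),
      Sigma.Lex (· < ·) (fun _ => (· < ·)) a b ↔ E a < E b)

include hE

lemma E_lt_iff (j : Fin l) (s t : Fin (r j)) : E ⟨j, s⟩ < E ⟨j, t⟩ ↔ s < t := by
  rw [← hE]
  constructor
  · intro h
    rcases Sigma.lex_iff.1 h with h | ⟨h, h2⟩
    · exact absurd h (lt_irrefl j)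
    · exact h2
  · exact fun h => Sigma.Lex.right _ _ h

lemma E_symm_fst_eq (a b : Fin (∑ j, r j)) (hab : a < b)
    (hρ : ¬ (E.symm a).1 < (E.symm b).1) : (E.symm a).1 = (E.symm b).1 := by
  have h := (hE (E.symm a) (E.symm b)).2 (by simpa using hab)
  rcases Sigma.lex_iff.1 h with h | ⟨h, _⟩
  · exact absurd h hρ
  · exact h

lemma gprod_bperm (p : Fin l → ℕ) (g : ∀ j, Equiv.Perm (Fin (r j))) :
    gprod (fun k => p ((E.symm k).1)) (bperm r E g)
      = ∏ j, (if Odd (p j) then ((Equiv.Perm.sign (g j) : ℤˣ) : ℤ) else 1) := by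
  have step1 : ∀ j : Fin l, (if Odd (p j) then ((Equiv.Perm.sign (g j) : ℤˣ) : ℤ) else 1)
      = ∏ y ∈ invPairs (r j) (g j), (-1 : ℤ) ^ (p j * p j) := by
    intro j
    by_cases hj : Odd (p j)
    · rw [if_pos hj, sign_eq_prod_invPairs]
      exact Finset.prod_congr rfl fun y _ => ((hj.mul hj).neg_one_pow).symm
    · rw [if_neg hj]
      rw [Nat.not_odd_iff_even] at hj
      exact (Finset.prod_eq_one fun y _ => (hj.mul_right (p j)).neg_one_pow).symm
  rw [Finset.prod_congr rfl fun j _ => step1 j]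
  have hsig : (∏ j, ∏ y ∈ invPairs (r j) (g j), (-1 : ℤ) ^ (p j * p j))
      = ∏ x ∈ Finset.univ.sigma (fun j => invPairs (r j) (g j)),
          (-1 : ℤ) ^ (p x.1 * p x.1) :=
    (Finset.prod_sigma Finset.univ (fun j => invPairs (r j) (g j))
      (fun x => (-1 : ℤ) ^ (p x.1 * p x.1))).symm
  rw [hsig, gprod]
  refine (Finset.prod_bij (fun x _ => (E ⟨x.1, x.2.1⟩, E ⟨x.1, x.2.2⟩)) ?_ ?_ ?_ ?_).symm
  · rintro ⟨j, s, t⟩ hx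
    have hx' : s < t ∧ g j t < g j s := by simpa [invPairs] using hx
    simp only [invPairs, Finset.mem_filter, Finset.mem_univ, true_and]
    refine ⟨(E_lt_iff r E hE j s t).2 hx'.1, ?_⟩
    rw [bperm_apply, bperm_apply]
    exact (E_lt_iff r E hE j _ _).2 hx'.2
  · rintro ⟨j, s, t⟩ h1 ⟨j', s', t'⟩ h2 h
    simp only [Prod.mk.injEq] at h
    have e1 := E.injective h.1
    have e2 := E.injective h.2
    rcases Sigma.mk.inj_iff.1 e1 with ⟨rfl, hs⟩
    rcases Sigma.mk.inj_iff.1 e2 with ⟨-, ht⟩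
    rw [eq_of_heq hs, eq_of_heq ht]
  · rintro ⟨a, b⟩ hab
    simp only [invPairs, Finset.mem_filter, Finset.mem_univ, true_and] at hab
    obtain ⟨h1, h2⟩ := hab
    have hfst : (E.symm a).1 = (E.symm b).1 := by
      refine E_symm_fst_eq r E hE a b h1 (fun hlt => ?_)
      have : bperm r E g a < bperm r E g b := by
        have hlex := (hE (E.symm (bperm r E g a)) (E.symm (bperm r E g b))).1 ?_
        · simpa using hlex
        · rw [bperm_symm_apply, bperm_symm_apply]
          exact Sigma.Lex.left _ _ hlt
      exact absurd h2 (not_lt_of_gt this)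
    rcases hsa : E.symm a with ⟨j, s⟩
    rcases hsb : E.symm b with ⟨j', t⟩
    have hj : j = j' := by rw [hsa, hsb] at hfst; exact hfst
    subst hj
    refine ⟨⟨j, s, t⟩, ?_, ?_⟩
    · simp only [Finset.mem_sigma, Finset.mem_univ, true_and, invPairs, Finset.mem_filter]
      have ha : E ⟨j, s⟩ = a := by rw [← hsa, E.apply_symm_apply]
      have hb : E ⟨j, t⟩ = b := by rw [← hsb, E.apply_symm_apply]
      refine ⟨?_, ?_⟩
      · rw [← E_lt_iff r E hE j s t, ha, hb]; exact h1
      · rw [← E_lt_iff r E hE j (g j t) (g j s)]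
        have h2' := h2
        rw [← ha, ← hb, bperm_apply, bperm_apply] at h2'
        exact h2'
    · simp only [Prod.mk.injEq]
      constructor
      · rw [← hsa, E.apply_symm_apply]
      · rw [← hsb, E.apply_symm_apply]
  · rintro ⟨j, s, t⟩ hx
    simp only [E.symm_apply_apply]

end Blocks

end Stmt16Aux

namespace Stmt16Aux

open Finset Equiv

variable {l : ℕ} (r : Fin l → ℕ) (E : (Σ j : Fin l, Fin (r j)) ≃ Fin (∑ j, r j))

lemma bperm_injective : Function.Injective (bperm r E) := by
  intro g g' h
  funext j
  ext t
  have h1 : bperm r E g (E ⟨j, t⟩) = bperm r E g' (E ⟨j, t⟩) := by rw [h]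
  rw [bperm_apply, bperm_apply] at h1
  have h2 := E.injective h1
  exact congrArg Fin.val (eq_of_heq (Sigma.mk.inj_iff.1 h2).2)

lemma exists_bperm (ρ : Equiv.Perm (Fin (∑ j, r j)))
    (hbp : ∀ k, (E.symm (ρ k)).1 = (E.symm k).1) :
    ∃ g, bperm r E g = ρ := by
  have hbp' : ∀ k, (E.symm (ρ⁻¹ k)).1 = (E.symm k).1 := by
    intro k
    conv_rhs => rw [← Stmt16Aux.perm_apply_inv_self ρ k, hbp]
  have hfst : ∀ (j : Fin l) (t : Fin (r j)), (E.symm (ρ (E ⟨j, t⟩))).1 = j := by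
    intro j t; rw [hbp, E.symm_apply_apply]
  have hfst' : ∀ (j : Fin l) (t : Fin (r j)), (E.symm (ρ⁻¹ (E ⟨j, t⟩))).1 = j := by
    intro j t; rw [hbp', E.symm_apply_apply]
  set f : ∀ j, Fin (r j) → Fin (r j) :=
    fun j t => Fin.cast (congrArg r (hfst j t)) (E.symm (ρ (E ⟨j, t⟩))).2 with hf
  set f' : ∀ j, Fin (r j) → Fin (r j) :=
    fun j t => Fin.cast (congrArg r (hfst' j t)) (E.symm (ρ⁻¹ (E ⟨j, t⟩))).2 with hf'
  have hkey : ∀ (j : Fin l) (t : Fin (r j)), E ⟨j, f j t⟩ = ρ (E ⟨j, t⟩) := by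
    intro j t
    conv_rhs => rw [← E.apply_symm_apply (ρ (E ⟨j, t⟩))]
    congr 1
    refine Sigma.ext (hfst j t).symm ?_
    exact (Fin.heq_ext_iff (congrArg r (hfst j t)).symm).2 rfl
  have hkey' : ∀ (j : Fin l) (t : Fin (r j)), E ⟨j, f' j t⟩ = ρ⁻¹ (E ⟨j, t⟩) := by
    intro j t
    conv_rhs => rw [← E.apply_symm_apply (ρ⁻¹ (E ⟨j, t⟩))]
    congr 1
    refine Sigma.ext (hfst' j t).symm ?_
    exact (Fin.heq_ext_iff (congrArg r (hfst' j t)).symm).2 rfl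
  have hleft : ∀ (j : Fin l) (t : Fin (r j)), f' j (f j t) = t := by
    intro j t
    have : E ⟨j, f' j (f j t)⟩ = E ⟨j, t⟩ := by
      rw [hkey', hkey, Stmt16Aux.perm_inv_apply_self]
    exact eq_of_heq (Sigma.mk.inj_iff.1 (E.injective this)).2
  have hright : ∀ (j : Fin l) (t : Fin (r j)), f j (f' j t) = t := by
    intro j t
    have : E ⟨j, f j (f' j t)⟩ = E ⟨j, t⟩ := by
      rw [hkey, hkey', Stmt16Aux.perm_apply_inv_self]
    exact eq_of_heq (Sigma.mk.inj_iff.1 (E.injective this)).2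
  refine ⟨fun j => ⟨f j, f' j, hleft j, hright j⟩, ?_⟩
  ext k
  have h2 : E ⟨(E.symm k).1, f (E.symm k).1 (E.symm k).2⟩ = ρ k := by
    rw [hkey]
    congr 1
    exact E.apply_symm_apply k
  have h3 : bperm r E (fun j => ⟨f j, f' j, hleft j, hright j⟩) k
      = E ⟨(E.symm k).1, f (E.symm k).1 (E.symm k).2⟩ := by
    conv_lhs => rw [← E.apply_symm_apply k]
    rw [bperm_apply]
    rfl
  rw [h3, h2]

lemma W_bperm {H : Type*} [NormedAddCommGroup H] [InnerProductSpace ℝ H]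
    (v : (j : Fin l) → Fin (r j) → H) (g : ∀ j, Equiv.Perm (Fin (r j))) :
    (∏ k, (inner ℝ (v (E.symm (bperm r E g k)).1 (E.symm (bperm r E g k)).2)
        (v (E.symm k).1 (E.symm k).2) : ℝ))
      = ∏ j, ∏ t, (inner ℝ (v j (g j t)) (v j t) : ℝ) := by
  rw [← Equiv.prod_comp E (fun k => (inner ℝ (v (E.symm (bperm r E g k)).1
      (E.symm (bperm r E g k)).2) (v (E.symm k).1 (E.symm k).2) : ℝ))]
  rw [← Finset.univ_sigma_univ, Finset.prod_sigma]
  refine Finset.prod_congr rfl fun j _ => Finset.prod_congr rfl fun a _ => ?_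
  rw [bperm_apply, E.symm_apply_apply, E.symm_apply_apply]

end Stmt16Aux

open Finset Equiv Stmt16Aux

/-- Norm of the graded symmetrization of a concatenated elementary tensor of (possibly
repeated) orthonormal basis vectors. The blocks are `v j t ∈ H_j`, `t < r j`, `j < l`:
unit vectors with pairwise inner products in `{0,1}`, vectors from different blocks
orthogonal, and within a block of odd degree pairwise orthogonal (strictly increasing
indices); `E` enumerates the blocks in (lexicographic) order into `Fin m`, `m = Σ r j`.
In terms of the product formula for inner products of elementary tensors, the claim
`‖P(e^{(1)}_{k₁^{(1)}}⊗…⊗e^{(l)}_{k_{r_l}^{(l)}})‖² = (r₁!⋯r_l!/m!) ∏_j ‖v j 1 ⋄ ⋯ ⋄ v j r_j‖²`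
reads as the following scalar identity, where the diamond-power norm is
`‖h₁⋄…⋄h_r‖² = (1/r!) Σ_{σ} 𝔖(σ,j) ∏_t ⟨h_{σ(t)}, h_t⟩`, with `𝔖(σ,j) = sign σ` for
`p j` odd and `𝔖(σ,j) = 1` for `p j` even. -/
theorem stmt_16 {H : Type*} [NormedAddCommGroup H] [InnerProductSpace ℝ H]
    (l : ℕ) (p : Fin l → ℕ) (r : Fin l → ℕ)
    (v : (j : Fin l) → Fin (r j) → H)
    (hunit : ∀ j t, ⟪v j t, v j t⟫ = 1)
    (h01 : ∀ j s t, ⟪v j s, v j t⟫ = 0 ∨ ⟪v j s, v j t⟫ = 1)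
    (hcross : ∀ j j' s t, j ≠ j' → ⟪v j s, v j' t⟫ = 0)
    (hodd : ∀ j, Odd (p j) → ∀ s t, s ≠ t → ⟪v j s, v j t⟫ = 0)
    (E : (Σ j : Fin l, Fin (r j)) ≃ Fin (∑ j, r j))
    (hE : ∀ a b : Σ j : Fin l, Fin (r j),
      Sigma.Lex (· < ·) (fun _ => (· < ·)) a b ↔ E a < E b) :
    (((∑ j, r j).factorial : ℝ)⁻¹) ^ 2 *
        ∑ σ : Equiv.Perm (Fin (∑ j, r j)), ∑ τ : Equiv.Perm (Fin (∑ j, r j)),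
          (gsign p (fun t => (E.symm t).1) σ : ℝ) * (gsign p (fun t => (E.symm t).1) τ : ℝ) *
            ∏ k, ⟪v (E.symm (σ k)).1 (E.symm (σ k)).2, v (E.symm (τ k)).1 (E.symm (τ k)).2⟫
      = ((∏ j, (r j).factorial : ℕ) : ℝ) / (((∑ j, r j).factorial : ℕ) : ℝ) *
        ∏ j, (((r j).factorial : ℝ)⁻¹ *
          ∑ σj : Equiv.Perm (Fin (r j)),
            (if Odd (p j) then ((Equiv.Perm.sign σj : ℤ) : ℝ) else 1) *
              ∏ t, ⟪v j (σj t), v j t⟫) := by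
  classical
  -- degree function
  have hB : ∀ ρ τ : Equiv.Perm (Fin (∑ j, r j)),
      (gsign p (fun t => (E.symm t).1) (ρ * τ) : ℝ) * (gsign p (fun t => (E.symm t).1) τ : ℝ) *
          ∏ k, ⟪v (E.symm ((ρ * τ) k)).1 (E.symm ((ρ * τ) k)).2,
            v (E.symm (τ k)).1 (E.symm (τ k)).2⟫
        = ((gprod (fun k => p ((E.symm k).1)) ρ⁻¹ : ℤ) : ℝ) *
            ∏ k, ⟪v (E.symm (ρ k)).1 (E.symm (ρ k)).2, v (E.symm k).1 (E.symm k).2⟫ := by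
    intro ρ τ
    have hprod : (∏ k, ⟪v (E.symm ((ρ * τ) k)).1 (E.symm ((ρ * τ) k)).2,
          v (E.symm (τ k)).1 (E.symm (τ k)).2⟫)
        = ∏ k, ⟪v (E.symm (ρ k)).1 (E.symm (ρ k)).2, v (E.symm k).1 (E.symm k).2⟫ :=
      Equiv.prod_comp τ
        (fun k => ⟪v (E.symm (ρ k)).1 (E.symm (ρ k)).2, v (E.symm k).1 (E.symm k).2⟫)
    rw [hprod]
    by_cases hbp : ∀ k, (E.symm (ρ k)).1 = (E.symm k).1
    · congr 1
      have hκ : ∀ k, (fun k => p ((E.symm k).1)) (ρ⁻¹ k) = (fun k => p ((E.symm k).1)) k := by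
        intro k
        have h0 := hbp (ρ⁻¹ k)
        rw [Stmt16Aux.perm_apply_inv_self] at h0
        simp only
        rw [h0]
      have h1 : gsign p (fun t => (E.symm t).1) (ρ * τ) * gsign p (fun t => (E.symm t).1) τ
          = gprod (fun k => p ((E.symm k).1)) ρ⁻¹ := by
        rw [gsign_eq_gprod, gsign_eq_gprod, mul_inv_rev,
          gprod_mul (fun k => p ((E.symm k).1)) τ⁻¹ ρ⁻¹ hκ,
          mul_comm (gprod (fun k => p ((E.symm k).1)) τ⁻¹)
            (gprod (fun k => p ((E.symm k).1)) ρ⁻¹),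
          mul_assoc, gprod_mul_self, mul_one]
      rw [← h1]
      push_cast
      ring
    · push_neg at hbp
      obtain ⟨k0, hk0⟩ := hbp
      have hW0 : (∏ k, ⟪v (E.symm (ρ k)).1 (E.symm (ρ k)).2, v (E.symm k).1 (E.symm k).2⟫)
          = 0 := Finset.prod_eq_zero (Finset.mem_univ k0) (hcross _ _ _ _ hk0)
      rw [hW0, mul_zero, mul_zero]
  -- swap the double sum and reparametrize
  rw [Finset.sum_comm]
  have step2 : ∀ τ : Equiv.Perm (Fin (∑ j, r j)),
      (∑ σ : Equiv.Perm (Fin (∑ j, r j)),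
        (gsign p (fun t => (E.symm t).1) σ : ℝ) * (gsign p (fun t => (E.symm t).1) τ : ℝ) *
          ∏ k, ⟪v (E.symm (σ k)).1 (E.symm (σ k)).2, v (E.symm (τ k)).1 (E.symm (τ k)).2⟫)
      = ∑ ρ : Equiv.Perm (Fin (∑ j, r j)),
          ((gprod (fun k => p ((E.symm k).1)) ρ⁻¹ : ℤ) : ℝ) *
            ∏ k, ⟪v (E.symm (ρ k)).1 (E.symm (ρ k)).2, v (E.symm k).1 (E.symm k).2⟫ := by
    intro τ
    rw [← Fintype.sum_equiv (Equiv.mulRight τ)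
      (fun ρ => (gsign p (fun t => (E.symm t).1) (ρ * τ) : ℝ) *
          (gsign p (fun t => (E.symm t).1) τ : ℝ) *
          ∏ k, ⟪v (E.symm ((ρ * τ) k)).1 (E.symm ((ρ * τ) k)).2,
            v (E.symm (τ k)).1 (E.symm (τ k)).2⟫)
      (fun σ => (gsign p (fun t => (E.symm t).1) σ : ℝ) *
          (gsign p (fun t => (E.symm t).1) τ : ℝ) *
          ∏ k, ⟪v (E.symm (σ k)).1 (E.symm (σ k)).2, v (E.symm (τ k)).1 (E.symm (τ k)).2⟫)
      (fun ρ => rfl)]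
    exact Finset.sum_congr rfl fun ρ _ => hB ρ τ
  rw [Finset.sum_congr rfl fun τ _ => step2 τ, Finset.sum_const, Finset.card_univ,
    Fintype.card_perm, Fintype.card_fin, nsmul_eq_mul]
  -- restrict to block-preserving permutations
  have stepC : (∑ ρ : Equiv.Perm (Fin (∑ j, r j)),
        ((gprod (fun k => p ((E.symm k).1)) ρ⁻¹ : ℤ) : ℝ) *
          ∏ k, ⟪v (E.symm (ρ k)).1 (E.symm (ρ k)).2, v (E.symm k).1 (E.symm k).2⟫)
      = ∑ g : (∀ j, Equiv.Perm (Fin (r j))),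
          ((gprod (fun k => p ((E.symm k).1)) (bperm r E g)⁻¹ : ℤ) : ℝ) *
            ∏ k, ⟪v (E.symm (bperm r E g k)).1 (E.symm (bperm r E g k)).2,
              v (E.symm k).1 (E.symm k).2⟫ := by
    rw [← Finset.sum_filter_add_sum_filter_not Finset.univ
      (fun ρ : Equiv.Perm (Fin (∑ j, r j)) => ∀ k, (E.symm (ρ k)).1 = (E.symm k).1)]
    have hzero : (∑ ρ ∈ Finset.univ.filter
        (fun ρ : Equiv.Perm (Fin (∑ j, r j)) => ¬ ∀ k, (E.symm (ρ k)).1 = (E.symm k).1),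
          ((gprod (fun k => p ((E.symm k).1)) ρ⁻¹ : ℤ) : ℝ) *
            ∏ k, ⟪v (E.symm (ρ k)).1 (E.symm (ρ k)).2, v (E.symm k).1 (E.symm k).2⟫) = 0 := by
      refine Finset.sum_eq_zero fun ρ hρ => ?_
      simp only [Finset.mem_filter, Finset.mem_univ, true_and] at hρ
      push_neg at hρ
      obtain ⟨k0, hk0⟩ := hρ
      rw [Finset.prod_eq_zero (Finset.mem_univ k0) (hcross _ _ _ _ hk0), mul_zero]
    rw [hzero, add_zero]
    refine (Finset.sum_bij (fun g _ => bperm r E g) ?_ ?_ ?_ ?_).symm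
    · intro g _
      simp only [Finset.mem_filter, Finset.mem_univ, true_and]
      exact bperm_bp r E g
    · intro g1 _ g2 _ h
      exact bperm_injective r E h
    · intro ρ hρ
      simp only [Finset.mem_filter, Finset.mem_univ, true_and] at hρ
      obtain ⟨g, hg⟩ := exists_bperm r E ρ hρ
      exact ⟨g, Finset.mem_univ g, hg⟩
    · intro g _
      rfl
  rw [stepC]
  -- evaluate each block term
  have hterm : ∀ g : (∀ j, Equiv.Perm (Fin (r j))),
      ((gprod (fun k => p ((E.symm k).1)) (bperm r E g)⁻¹ : ℤ) : ℝ) *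
          ∏ k, ⟪v (E.symm (bperm r E g k)).1 (E.symm (bperm r E g k)).2,
            v (E.symm k).1 (E.symm k).2⟫
        = ∏ j, ((if Odd (p j) then ((Equiv.Perm.sign (g j) : ℤ) : ℝ) else 1) *
            ∏ t, ⟪v j (g j t), v j t⟫) := by
    intro g
    rw [bperm_inv, gprod_bperm r E hE p (fun j => (g j)⁻¹), W_bperm r E v g]
    have hsg : ∀ j : Fin l,
        (if Odd (p j) then ((Equiv.Perm.sign ((g j)⁻¹) : ℤˣ) : ℤ) else 1)
          = (if Odd (p j) then ((Equiv.Perm.sign (g j) : ℤˣ) : ℤ) else 1) := fun j => by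
      rw [Equiv.Perm.sign_inv]
    rw [Finset.prod_congr rfl fun j _ => hsg j]
    push_cast
    rw [← Finset.prod_mul_distrib]
  rw [Finset.sum_congr rfl fun g _ => hterm g]
  rw [← Fintype.prod_sum (fun j (σj : Equiv.Perm (Fin (r j))) =>
    (if Odd (p j) then ((Equiv.Perm.sign σj : ℤ) : ℝ) else 1) * ∏ t, ⟪v j (σj t), v j t⟫)]
  -- final arithmetic
  have hprodmul : (∏ j, (((r j).factorial : ℝ)⁻¹ *
        ∑ σj : Equiv.Perm (Fin (r j)),
          (if Odd (p j) then ((Equiv.Perm.sign σj : ℤ) : ℝ) else 1) *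
            ∏ t, ⟪v j (σj t), v j t⟫))
      = (∏ j, ((r j).factorial : ℝ)⁻¹) *
        ∏ j, (∑ σj : Equiv.Perm (Fin (r j)),
          (if Odd (p j) then ((Equiv.Perm.sign σj : ℤ) : ℝ) else 1) *
            ∏ t, ⟪v j (σj t), v j t⟫) := Finset.prod_mul_distrib
  rw [hprodmul]
  have hm0 : (((∑ j, r j).factorial : ℕ) : ℝ) ≠ 0 := Nat.cast_ne_zero.2 (Nat.factorial_ne_zero _)
  have hr0 : ∀ j : Fin l, (((r j).factorial : ℕ) : ℝ) ≠ 0 :=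
    fun j => Nat.cast_ne_zero.2 (Nat.factorial_ne_zero _)
  rw [show ((∏ j, (r j).factorial : ℕ) : ℝ) = ∏ j, ((r j).factorial : ℝ) by push_cast; rfl]
  rw [show (∏ j, ((r j).factorial : ℝ)⁻¹) = (∏ j, ((r j).factorial : ℝ))⁻¹ by
    rw [← Finset.prod_inv_distrib]]
  have hrprod0 : (∏ j, ((r j).factorial : ℝ)) ≠ 0 := Finset.prod_ne_zero_iff.2 fun j _ => hr0 j
  field_simp
end
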